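/- arXiv:1412.4259 — 2 statements merged into one kernel-verified Lean document; each statement's English description precedes it below -/
import Mathlib

section
/- There exists a constant c ∈ ℕ such that for every d ≥ 1, every d-VASS V = (Q,T), and all configurations p(u), q(v) with u,v ∈ ℤ^d: if p(u) →*_{ℤ^d} q(v), then there exists a word π ∈ T* with p(u) →^π_{ℤ^d} q(v) and |π| ≤ (|Q| + |T| + ‖T‖ + ‖u‖ + ‖v‖ + 2)^{c·d}. -/
namespace VASS

/-- Integer vectors of dimension `d`. -/
abbrev Vec (d : ℕ) := Fin d → ℤ

/-- A transition of a `d`-VASS: source state, update vector, target state. -/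
abbrev Trans (d : ℕ) := ℕ × Vec d × ℕ

/-- The norm of a vector: maximum of absolute values of its components. -/
def vnorm {d : ℕ} (z : Vec d) : ℕ := Finset.univ.sup fun i => (z i).natAbs

/-- The norm of a transition set. -/
def tnorm {d : ℕ} (T : Finset (Trans d)) : ℕ := T.sup fun t => vnorm t.2.1

/-- The displacement of a word of transitions. -/
def disp {d : ℕ} (π : List (Trans d)) : Vec d := (π.map fun t => t.2.1).sum

/-- `IsPathFrom p q π` : `π` is a path from `p` to `q`. -/
def IsPathFrom {d : ℕ} : ℕ → ℕ → List (Trans d) → Prop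
  | p, q, [] => p = q
  | p, q, t :: rest => t.1 = p ∧ IsPathFrom t.2.2 q rest

/-- ℕ^d as a subset of ℤ^d. -/
def NatSet (d : ℕ) : Set (Vec d) := {v | ∀ i, 0 ≤ v i}

/-- `p(u) →^π_A q(v)`. -/
def Run {d : ℕ} (T : Finset (Trans d)) (A : Set (Vec d)) (p : ℕ) (u : Vec d)
    (q : ℕ) (v : Vec d) (π : List (Trans d)) : Prop :=
  (∀ t ∈ π, t ∈ T) ∧ IsPathFrom p q π ∧ u ∈ A ∧ v = u + disp π ∧
    ∀ i, 1 ≤ i → i ≤ π.length → u + disp (π.take i) ∈ A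

/-- `p(u) →*_A q(v)`. -/
def Reach {d : ℕ} (T : Finset (Trans d)) (A : Set (Vec d)) (p : ℕ) (u : Vec d)
    (q : ℕ) (v : Vec d) : Prop := ∃ π, Run T A p u q v π

/-- A linear path scheme `α₀ β₁* α₁ ⋯ β_k* α_k`, presented as the initial
segment `α₀` together with the list of pairs `(βᵢ, αᵢ)`. -/
abbrev LPS (d : ℕ) := List (Trans d) × List (List (Trans d) × List (Trans d))

/-- The underlying word `α₀ β₁ α₁ ⋯ β_k α_k` of a linear path scheme. -/
def lpsSupport {d : ℕ} (ρ : LPS d) : List (Trans d) :=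
  ρ.1 ++ (ρ.2.map fun s => s.1 ++ s.2).flatten

/-- The length of a linear path scheme. -/
def lpsLen {d : ℕ} (ρ : LPS d) : ℕ := (lpsSupport ρ).length

/-- The number of cycles of a linear path scheme. -/
def numCycles {d : ℕ} (ρ : LPS d) : ℕ := ρ.2.length

/-- `ρ` is a linear path scheme from `p` to `q` over the transition set `T`:
its underlying word uses transitions from `T` and is a path from `p` to `q`,
and each `βᵢ` is a cycle. -/
def IsLPSFrom {d : ℕ} (T : Finset (Trans d)) (p q : ℕ) (ρ : LPS d) : Prop :=
  (∀ t ∈ lpsSupport ρ, t ∈ T) ∧ IsPathFrom p q (lpsSupport ρ) ∧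
    ∀ s ∈ ρ.2, s.1 ≠ [] ∧ ∃ r, IsPathFrom r r s.1

/-- The word `α₀ β₁^{e₁} α₁ ⋯ β_k^{e_k} α_k` of a linear path scheme. -/
def lpsWord {d : ℕ} (ρ : LPS d) (e : List ℕ) : List (Trans d) :=
  ρ.1 ++ (List.zipWith (fun s n => (List.replicate n s.1).flatten ++ s.2) ρ.2 e).flatten

/-- Membership in the language of a linear path scheme. -/
def InLang {d : ℕ} (ρ : LPS d) (π : List (Trans d)) : Prop :=
  ∃ e : List ℕ, e.length = numCycles ρ ∧ π = lpsWord ρ e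

/-- `p(u) →^S_A q(v)` for a finite set `S` of linear path schemes. -/
def SReach {d : ℕ} (T : Finset (Trans d)) (S : Finset (LPS d)) (A : Set (Vec d))
    (p : ℕ) (u : Vec d) (q : ℕ) (v : Vec d) : Prop :=
  ∃ ρ ∈ S, ∃ π, InLang ρ π ∧ Run T A p u q v π

/-- δ(ρ): the set of displacements of words in the language of `ρ`. -/
def DispSet {d : ℕ} (ρ : LPS d) : Set (Vec d) := {z | ∃ π, InLang ρ π ∧ z = disp π}

/-- A quadrant of ℤ². -/
def IsQuadrant (Z : Set (Vec 2)) : Prop :=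
  ∃ ε : Fin 2 → Bool, Z = {v | ∀ i, if ε i then 0 ≤ v i else v i ≤ 0}

/-- A linear path scheme is zigzag-free if the displacements of all its cycles
lie in a single quadrant. -/
def ZigzagFree (ρ : LPS 2) : Prop :=
  ∃ Z, IsQuadrant Z ∧ ∀ s ∈ ρ.2, disp s.1 ∈ Z

set_option linter.unusedSectionVars false

section Basics
variable {d : ℕ}

/-- target-state map -/
def tgt : Trans d → ℕ := fun t => t.2.2

/-- sources match consecutively -/
def Ok : ℕ → List (Trans d) → Prop
  | _, [] => True
  | p, t :: l => t.1 = p ∧ Ok t.2.2 l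

/-- end state -/
def dst : ℕ → List (Trans d) → ℕ
  | p, [] => p
  | _, t :: l => dst t.2.2 l

@[simp] lemma Ok_nil (p : ℕ) : Ok (d := d) p [] := trivial
@[simp] lemma dst_nil (p : ℕ) : dst (d := d) p [] = p := rfl
@[simp] lemma Ok_cons {p : ℕ} {t : Trans d} {l : List (Trans d)} :
    Ok p (t :: l) ↔ t.1 = p ∧ Ok t.2.2 l := Iff.rfl
@[simp] lemma dst_cons {p : ℕ} {t : Trans d} {l : List (Trans d)} :
    dst p (t :: l) = dst t.2.2 l := rfl

lemma dst_append (p : ℕ) (xs ys : List (Trans d)) :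
    dst p (xs ++ ys) = dst (dst p xs) ys := by
  induction xs generalizing p with
  | nil => rfl
  | cons t l ih => simp [ih]

lemma Ok_append {p : ℕ} {xs ys : List (Trans d)} :
    Ok p (xs ++ ys) ↔ Ok p xs ∧ Ok (dst p xs) ys := by
  induction xs generalizing p with
  | nil => simp
  | cons t l ih => simp [ih, and_assoc]

lemma isPathFrom_iff {p q : ℕ} {π : List (Trans d)} :
    IsPathFrom p q π ↔ Ok p π ∧ dst p π = q := by
  induction π generalizing p with
  | nil => simp [IsPathFrom, Ok, dst, eq_comm]
  | cons t l ih => simp [IsPathFrom, ih, and_assoc]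

lemma disp_append (xs ys : List (Trans d)) :
    disp (xs ++ ys) = disp xs + disp ys := by
  simp [disp]

lemma disp_apply (π : List (Trans d)) (i : Fin d) :
    disp π i = (π.map fun t => t.2.1 i).sum := by
  induction π with
  | nil => rfl
  | cons t l ih => simp [disp] at ih ⊢; simp [ih]

/-- visited states as a Finset -/
def stF (p : ℕ) (π : List (Trans d)) : Finset ℕ := insert p (π.map tgt).toFinset

lemma mem_stF_iff {p a : ℕ} {π : List (Trans d)} :
    a ∈ stF p π ↔ ∃ k, k ≤ π.length ∧ dst p (π.take k) = a := by
  induction π generalizing p with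
  | nil =>
    simp [stF, eq_comm]
  | cons t l ih =>
    constructor
    · intro h
      rcases Finset.mem_insert.1 h with h | h
      · exact ⟨0, by simp [h]⟩
      · have : a ∈ stF t.2.2 l := by
          simp [stF, tgt] at h ⊢
          tauto
        rcases ih.1 this with ⟨k, hk, hdst⟩
        exact ⟨k + 1, by simpa using hk, by simpa using hdst⟩
    · rintro ⟨k, hk, hdst⟩
      match k with
      | 0 => simp at hdst; simp [stF, ← hdst]
      | (k + 1) =>
        have : a ∈ stF t.2.2 l := ih.2 ⟨k, by simpa using hk, by simpa using hdst⟩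
        simp [stF, tgt] at this ⊢
        tauto

lemma stF_mono_append (p : ℕ) (xs ys : List (Trans d)) :
    stF p (xs ++ ys) = stF p xs ∪ (ys.map tgt).toFinset := by
  ext a
  simp only [stF, Finset.mem_insert, List.mem_toFinset, List.mem_map, List.mem_append,
    Finset.mem_union]
  aesop

lemma stF_subset_of_sub {p : ℕ} {π π' : List (Trans d)}
    (h : ∀ t ∈ π', t ∈ π) : stF p π' ⊆ stF p π := by
  intro a ha
  simp only [stF, Finset.mem_insert, List.mem_toFinset, List.mem_map] at ha ⊢
  rcases ha with h1 | ⟨t, ht, h2⟩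
  · tauto
  · exact Or.inr ⟨t, h t ht, h2⟩

end Basics
section Reduce
variable {d : ℕ}

def Removable (p : ℕ) (π : List (Trans d)) : Prop :=
  ∃ xs c ys, π = xs ++ c ++ ys ∧ c ≠ [] ∧ dst (dst p xs) c = dst p xs ∧
    c.length ≤ (stF p π).card + 1 ∧ stF p (xs ++ ys) = stF p π

lemma long_removable {p : ℕ} {π : List (Trans d)}
    (hL : (stF p π).card ^ 2 + 2 * (stF p π).card < π.length) : Removable p π := by
  by_contra hNR
  set n := (stF p π).card with hn
  set L := π.length with hLdef
  set vs : ℕ → ℕ := fun k => dst p (π.take k) with hvs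
  have hvs_mem : ∀ k, k ≤ L → vs k ∈ stF p π := fun k hk => mem_stF_iff.2 ⟨k, hk, rfl⟩
  have Hwin : ∀ w, w < n + 1 → ∃ s, s ∈ stF p π ∧
      (∀ k, k ≤ L → vs k = s → w * (n+1) < k ∧ k ≤ w * (n+1) + n) := by
    intro w hw
    have hwn : w ≤ n := Nat.lt_succ_iff.1 hw
    have hwin_le : w * (n+1) + n ≤ L := by nlinarith
    have body : ∀ x y, x < n + 1 → y < n + 1 → x < y →
        vs (w * (n+1) + x) = vs (w * (n+1) + y) → ∃ s, s ∈ stF p π ∧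
        (∀ k, k ≤ L → vs k = s → w * (n+1) < k ∧ k ≤ w * (n+1) + n) := by
      intro x y hx hy hlt hveq
      set i := w * (n+1) + x with hi
      set j := w * (n+1) + y with hj
      have hij : i < j := by omega
      have hjL : j ≤ L := by omega
      have hiL : i ≤ L := by omega
      set xs := π.take i with hxs
      set c := (π.drop i).take (j - i) with hc
      set ys := π.drop j with hys
      have hlenxs : xs.length = i := by
        rw [hxs, List.length_take]; omega
      have htj : π.take j = xs ++ c := by
        have := List.take_add (l := π) (i := i) (j := j - i)
        rw [show i + (j - i) = j by omega] at this
        exact this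
      have hdec : π = xs ++ c ++ ys := by
        rw [← htj, hys]; exact (List.take_append_drop j π).symm
      have hlenc : c.length = j - i := by
        rw [hc, List.length_take, List.length_drop]; omega
      have hcne : c ≠ [] := by
        intro h; rw [h] at hlenc; simp at hlenc; omega
      have e1 : dst (dst p xs) c = vs j := by
        rw [← dst_append, ← htj]
      have e2 : vs i = dst p xs := by
        show dst p (List.take i π) = dst p xs
        rw [← hxs]
      have hcyc : dst (dst p xs) c = dst p xs := by
        rw [e1, ← hveq, e2]
      have hclen : c.length ≤ n + 1 := by omega
      have hne : stF p (xs ++ ys) ≠ stF p π := by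
        intro h
        exact hNR ⟨xs, c, ys, hdec, hcne, hcyc, by rw [← hn]; exact hclen, h⟩
      have hsub : stF p (xs ++ ys) ⊆ stF p π := by
        apply stF_subset_of_sub
        intro t ht
        rw [hdec]
        simp at ht ⊢
        tauto
      obtain ⟨s, hs, hsnot⟩ := Finset.exists_of_ssubset (lt_of_le_of_ne hsub hne)
      refine ⟨s, hs, ?_⟩
      intro k hk hvk
      have hk_not_le : ¬ (k ≤ i) := by
        intro hki
        apply hsnot
        apply mem_stF_iff.2
        refine ⟨k, by simp [hlenxs]; omega, ?_⟩
        have h1 : (xs ++ ys).take k = xs.take k := by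
          apply List.take_append_of_le_length; omega
        have h2 : π.take k = xs.take k := by
          rw [hdec, List.append_assoc]
          apply List.take_append_of_le_length; omega
        rw [h1, ← h2]; exact hvk
      have hk_not_ge : ¬ (j ≤ k) := by
        intro hkj
        apply hsnot
        apply mem_stF_iff.2
        have hysl : ys.length = L - j := by rw [hys, List.length_drop]
        refine ⟨i + (k - j), by simp [hlenxs, hysl]; omega, ?_⟩
        have h1 : (xs ++ ys).take (i + (k - j)) = xs ++ ys.take (k - j) := by
          rw [List.take_add]
          congr 1
          · rw [← hlenxs, List.take_left]
          · rw [← hlenxs, List.drop_left]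
        have h2 : π.take k = (xs ++ c) ++ ys.take (k - j) := by
          have h3 := List.take_add (l := π) (i := j) (j := k - j)
          rw [show j + (k - j) = k by omega] at h3
          rw [h3, htj, hys]
        rw [h1, dst_append]
        have h4 : vs k = dst (dst p xs) (ys.take (k - j)) := by
          show dst p (List.take k π) = _
          rw [h2, dst_append, dst_append, hcyc]
        rw [← h4, hvk]
      constructor
      · omega
      · omega
    obtain ⟨x, hx, y, hy, hxy, hveq⟩ :
        ∃ x ∈ Finset.range (n+1), ∃ y ∈ Finset.range (n+1), x ≠ y ∧
          vs (w * (n+1) + x) = vs (w * (n+1) + y) := by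
      apply Finset.exists_ne_map_eq_of_card_lt_of_maps_to (t := stF p π)
      · simp [hn]
      · intro x hx
        simp only [Finset.mem_coe, Finset.mem_range] at hx
        exact hvs_mem _ (by omega)
    simp only [Finset.mem_range] at hx hy
    rcases Nat.lt_or_ge x y with hlt | hge
    · exact body x y hx hy hlt hveq
    · exact body y x hy hx (by omega) hveq.symm
  let g : ℕ → ℕ := fun w => if hw : w < n + 1 then (Hwin w hw).choose else 0
  have hg : ∀ w, w < n + 1 → (g w ∈ stF p π ∧
      (∀ k, k ≤ L → vs k = g w → w * (n+1) < k ∧ k ≤ w * (n+1) + n)) := by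
    intro w hw
    have := (Hwin w hw).choose_spec
    simp only [g, dif_pos hw]
    exact this
  have hinj : Set.InjOn g (Finset.range (n+1)) := by
    intro w hw w' hw' heq
    simp only [Finset.coe_range, Set.mem_Iio] at hw hw'
    by_contra hne
    obtain ⟨hmem, hocc⟩ := hg w hw
    obtain ⟨hmem', hocc'⟩ := hg w' hw'
    obtain ⟨k, hk, hvk⟩ := mem_stF_iff.1 hmem
    have h1 := hocc k hk hvk
    have h2 := hocc' k hk (by rw [← heq]; exact hvk)
    rcases Nat.lt_or_ge w w' with h | h
    · have : w * (n+1) + n < w' * (n+1) := by nlinarith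
      omega
    · have hww : w' < w := by omega
      have : w' * (n+1) + n < w * (n+1) := by nlinarith
      omega
  have hcard := Finset.card_le_card_of_injOn g
    (fun w hw => (hg w (by simpa using hw)).1) hinj
  rw [Finset.card_range] at hcard
  omega

end Reduce
section ReduceMain
variable {d : ℕ}

lemma reduce_aux (p : ℕ) : ∀ (N : ℕ) (π : List (Trans d)), π.length ≤ N → Ok p π →
    ∃ (ω : List (Trans d)) (cs : List (ℕ × List (Trans d))),
      Ok p ω ∧ dst p ω = dst p π ∧ (∀ t ∈ ω, t ∈ π) ∧ stF p ω = stF p π ∧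
      (∀ ac ∈ cs, ac.1 ∈ stF p π ∧ Ok ac.1 ac.2 ∧ dst ac.1 ac.2 = ac.1 ∧
         (∀ t ∈ ac.2, t ∈ π) ∧ ac.2.length ≤ (stF p π).card + 1) ∧
      disp π = disp ω + (cs.map (fun ac => disp ac.2)).sum ∧
      ω.length ≤ (stF p π).card ^ 2 + 2 * (stF p π).card := by
  intro N
  induction N with
  | zero =>
    intro π hlen _
    have : π = [] := List.length_eq_zero_iff.1 (Nat.le_zero.1 hlen)
    subst this
    exact ⟨[], [], trivial, rfl, by simp, rfl, by simp, by simp [disp], by simp⟩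
  | succ N ih =>
    intro π hlen hOk
    by_cases hrem : Removable p π
    · obtain ⟨xs, c, ys, hdec, hcne, hcyc, hclen, hpres⟩ := hrem
      set π' := xs ++ ys with hπ'
      have hsubmem : ∀ t ∈ π', t ∈ π := by
        intro t ht; rw [hdec]; simp [hπ'] at ht ⊢; tauto
      have hcsub : ∀ t ∈ c, t ∈ π := by
        intro t ht; rw [hdec]; simp; tauto
      have hOk' : Ok p π' := by
        rw [hdec] at hOk
        rw [Ok_append] at hOk
        obtain ⟨h1, h2⟩ := hOk
        rw [Ok_append] at h1
        show Ok p (xs ++ ys)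
        rw [Ok_append]
        exact ⟨h1.1, by rw [← hcyc, ← dst_append]; exact h2⟩
      have hOkxs : Ok p xs := by
        rw [hdec, List.append_assoc, Ok_append] at hOk; exact hOk.1
      have hOkc : Ok (dst p xs) c := by
        rw [hdec, List.append_assoc, Ok_append] at hOk
        have := hOk.2
        rw [Ok_append] at this
        exact this.1
      have hdst' : dst p π' = dst p π := by
        rw [hdec, hπ', dst_append, dst_append, dst_append, hcyc]
      have hlen' : π'.length ≤ N := by
        have h1 : π'.length = xs.length + ys.length := by simp [hπ']
        have h2 : π.length = xs.length + c.length + ys.length := by rw [hdec]; simp; omega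
        have h3 : 1 ≤ c.length := by
          cases c with
          | nil => exact absurd rfl hcne
          | cons a l => simp
        omega
      obtain ⟨ω, cs, o1, o2, o3, o4, o5, o6, o7⟩ := ih π' hlen' hOk'
      have hanchor : dst p xs ∈ stF p π := by
        apply mem_stF_iff.2
        refine ⟨xs.length, ?_, ?_⟩
        · rw [hdec]; simp
        · rw [hdec, List.append_assoc, List.take_left]
      refine ⟨ω, (dst p xs, c) :: cs, o1, o2.trans hdst', fun t ht => hsubmem t (o3 t ht),
        o4.trans hpres, ?_, ?_, ?_⟩
      · intro ac hac
        rcases List.mem_cons.1 hac with h | h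
        · subst h
          exact ⟨hanchor, hOkc, hcyc, hcsub, hclen⟩
        · obtain ⟨a1, a2, a3, a4, a5⟩ := o5 ac h
          exact ⟨hpres ▸ a1, a2, a3, fun t ht => hsubmem t (a4 t ht), by rw [← hpres]; exact a5⟩
      · have hd : disp π = disp π' + disp c := by
          rw [hdec, hπ']
          simp [disp_append]
          abel
        rw [hd, o6]
        simp
        abel
      · rw [← hpres]; exact hπ' ▸ o7
    · have hshort : π.length ≤ (stF p π).card ^ 2 + 2 * (stF p π).card := by
        by_contra h
        exact hrem (long_removable (by omega))
      exact ⟨π, [], hOk, rfl, fun t ht => ht, rfl, by simp, by simp [disp], hshort⟩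

lemma reduce (p : ℕ) (π : List (Trans d)) (hOk : Ok p π) :
    ∃ (ω : List (Trans d)) (cs : List (ℕ × List (Trans d))),
      Ok p ω ∧ dst p ω = dst p π ∧ (∀ t ∈ ω, t ∈ π) ∧ stF p ω = stF p π ∧
      (∀ ac ∈ cs, ac.1 ∈ stF p π ∧ Ok ac.1 ac.2 ∧ dst ac.1 ac.2 = ac.1 ∧
         (∀ t ∈ ac.2, t ∈ π) ∧ ac.2.length ≤ (stF p π).card + 1) ∧
      disp π = disp ω + (cs.map (fun ac => disp ac.2)).sum ∧
      ω.length ≤ (stF p π).card ^ 2 + 2 * (stF p π).card :=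
  reduce_aux p π.length π le_rfl hOk

lemma insert_one {p a : ℕ} {ω c : List (Trans d)} (hOk : Ok p ω) (ha : a ∈ stF p ω)
    (hOkc : Ok a c) (hcyc : dst a c = a) :
    ∃ ω', Ok p ω' ∧ dst p ω' = dst p ω ∧ ω'.length = ω.length + c.length ∧
      disp ω' = disp ω + disp c ∧ (∀ t ∈ ω', t ∈ ω ∨ t ∈ c) ∧ stF p ω ⊆ stF p ω' := by
  obtain ⟨k, hk, hdst⟩ := mem_stF_iff.1 ha
  refine ⟨ω.take k ++ c ++ ω.drop k, ?_, ?_, ?_, ?_, ?_, ?_⟩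
  · rw [List.append_assoc, Ok_append, Ok_append]
    have h0 : Ok p (ω.take k ++ ω.drop k) := by rw [List.take_append_drop]; exact hOk
    rw [Ok_append, hdst] at h0
    exact ⟨h0.1, by rw [hdst]; exact hOkc, by rw [hdst, hcyc]; exact h0.2⟩
  · rw [List.append_assoc, dst_append, dst_append, hdst, hcyc]
    conv_rhs => rw [← List.take_append_drop k ω]
    rw [dst_append, hdst]
  · simp
    have : k ≤ ω.length := hk
    omega
  · rw [disp_append, disp_append]
    conv_rhs => rw [← List.take_append_drop k ω]
    rw [disp_append]
    abel
  · intro t ht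
    simp only [List.mem_append] at ht
    rcases ht with (h | h) | h
    · exact Or.inl ((List.take_sublist k ω).subset h)
    · exact Or.inr h
    · exact Or.inl ((List.drop_sublist k ω).subset h)
  · apply stF_subset_of_sub
    intro t ht
    have ht2 : t ∈ ω.take k ++ ω.drop k := by rw [List.take_append_drop]; exact ht
    simp only [List.mem_append] at ht2 ⊢
    tauto

lemma insert_many {p : ℕ} : ∀ (cs : List (ℕ × List (Trans d))) (ω : List (Trans d)),
    Ok p ω → (∀ ac ∈ cs, ac.1 ∈ stF p ω ∧ Ok ac.1 ac.2 ∧ dst ac.1 ac.2 = ac.1) →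
    ∃ ω', Ok p ω' ∧ dst p ω' = dst p ω ∧
      ω'.length = ω.length + (cs.map (fun ac => ac.2.length)).sum ∧
      disp ω' = disp ω + (cs.map (fun ac => disp ac.2)).sum ∧
      (∀ t ∈ ω', t ∈ ω ∨ ∃ ac ∈ cs, t ∈ ac.2) := by
  intro cs
  induction cs with
  | nil =>
    intro ω hOk _
    exact ⟨ω, hOk, rfl, by simp, by simp [disp], fun t ht => Or.inl ht⟩
  | cons ac cs ih =>
    intro ω hOk hcs
    obtain ⟨h1, h2, h3⟩ := hcs ac (List.mem_cons_self)
    obtain ⟨ω₁, i1, i2, i3, i4, i5, i6⟩ := insert_one hOk h1 h2 h3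
    have hcs' : ∀ bc ∈ cs, bc.1 ∈ stF p ω₁ ∧ Ok bc.1 bc.2 ∧ dst bc.1 bc.2 = bc.1 := by
      intro bc hbc
      obtain ⟨b1, b2, b3⟩ := hcs bc (List.mem_cons_of_mem _ hbc)
      exact ⟨i6 b1, b2, b3⟩
    obtain ⟨ω', j1, j2, j3, j4, j5⟩ := ih ω₁ i1 hcs'
    refine ⟨ω', j1, j2.trans i2, ?_, ?_, ?_⟩
    · rw [j3, i3]; simp; omega
    · rw [j4, i4]; simp; abel
    · intro t ht
      rcases j5 t ht with h | h
      · rcases i5 t h with h' | h'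
        · exact Or.inl h'
        · exact Or.inr ⟨ac, List.mem_cons_self, h'⟩
      · obtain ⟨bc, hbc, hbt⟩ := h
        exact Or.inr ⟨bc, List.mem_cons_of_mem _ hbc, hbt⟩

end ReduceMain
section Rank
variable {d : ℕ}

lemma rank_exists_R (W : Submodule ℚ (Fin d → ℚ)) :
    ∃ R : Finset (Fin d), R.card ≤ Module.finrank ℚ W ∧
      ∀ y ∈ W, (∀ i ∈ R, y i = 0) → y = 0 := by
  generalize hn : Module.finrank ℚ W = n
  induction n using Nat.strong_induction_on generalizing W with
  | _ n ih =>
  by_cases hW : ∀ y ∈ W, y = 0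
  · exact ⟨∅, Nat.zero_le _, fun y hy _ => hW y hy⟩
  · push_neg at hW
    obtain ⟨y₀, hy₀W, hy₀⟩ := hW
    have hex : ∃ i₀, y₀ i₀ ≠ 0 := by
      by_contra h; push_neg at h; exact hy₀ (funext h)
    obtain ⟨i₀, hi₀⟩ := hex
    set W' := W ⊓ LinearMap.ker (LinearMap.proj (R := ℚ) (φ := fun _ : Fin d => ℚ) i₀)
      with hW'
    have hy₀n : y₀ ∉ W' := by
      rw [hW']
      intro h
      exact hi₀ ((Submodule.mem_inf.1 h).2)
    have hlt : W' < W := lt_of_le_of_ne inf_le_left (by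
      intro h; rw [h] at hy₀n; exact hy₀n hy₀W)
    have hrk : Module.finrank ℚ ↥W' < n := by
      rw [← hn]; exact Submodule.finrank_lt_finrank_of_lt hlt
    obtain ⟨R', hR'c, hR'⟩ := ih (Module.finrank ℚ ↥W') hrk W' rfl
    refine ⟨insert i₀ R', ?_, ?_⟩
    · calc (insert i₀ R').card ≤ R'.card + 1 := Finset.card_insert_le _ _
        _ ≤ Module.finrank ℚ ↥W' + 1 := by omega
        _ ≤ n := by omega
    · intro y hy hzero
      have hy' : y ∈ W' := by
        rw [hW', Submodule.mem_inf]
        exact ⟨hy, by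
          simp only [LinearMap.mem_ker]
          exact hzero i₀ (Finset.mem_insert_self _ _)⟩
      exact hR' y hy' (fun i hi => hzero i (Finset.mem_insert_of_mem hi))

def toQ : Vec d → (Fin d → ℚ) := fun x i => (x i : ℚ)

def toQhom : Vec d →+ (Fin d → ℚ) where
  toFun := toQ
  map_zero' := by funext i; simp [toQ]
  map_add' := by intro a b; funext i; simp [toQ]

lemma toQ_list_sum (l : List (Vec d)) : toQ l.sum = (l.map toQ).sum := by
  have := map_list_sum (toQhom (d := d)) l
  simpa [toQhom] using this

lemma toQ_eq_zero {x : Vec d} (h : toQ x = 0) : x = 0 := by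
  funext i
  have := congrFun h i
  simp [toQ] at this
  exact this

def spanT (T : Finset (Trans d)) : Submodule ℚ (Fin d → ℚ) :=
  Submodule.span ℚ ((T.image (fun t => toQ t.2.1)) : Set (Fin d → ℚ))

lemma disp_mem_spanT {T : Finset (Trans d)} {c : List (Trans d)} (h : ∀ t ∈ c, t ∈ T) :
    toQ (disp c) ∈ spanT T := by
  rw [disp, toQ_list_sum]
  apply list_sum_mem
  intro x hx
  simp only [List.mem_map] at hx
  obtain ⟨y, hy, hxy⟩ := hx
  obtain ⟨t, ht, hty⟩ := hy
  apply Submodule.subset_span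
  simp only [Finset.coe_image, Set.mem_image, Finset.mem_coe]
  exact ⟨t, h t ht, by rw [← hxy, ← hty]⟩

lemma rank_main (T : Finset (Trans d)) :
    ∃ R : Finset (Fin d), R.card ≤ d ∧ R.card ≤ T.card ∧
      ∀ x : Vec d, toQ x ∈ spanT T → (∀ i ∈ R, x i = 0) → x = 0 := by
  obtain ⟨R, hRc, hR⟩ := rank_exists_R (spanT T)
  refine ⟨R, ?_, ?_, ?_⟩
  · calc R.card ≤ (Finset.univ : Finset (Fin d)).card := Finset.card_le_univ R
      _ = d := by simp
  · calc R.card ≤ Module.finrank ℚ (spanT T) := hRc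
      _ ≤ (T.image (fun t => toQ t.2.1)).card := by
          apply finrank_span_finset_le_card
      _ ≤ T.card := Finset.card_image_le
  · intro x hx hzero
    apply toQ_eq_zero
    apply hR _ hx
    intro i hi
    simp [toQ, hzero i hi]

end Rank
section FR
variable {κ : Type*} [Fintype κ] {ι : Type*} [DecidableEq ι]

lemma FR (s : Finset ι) (w : ι → κ → ℚ) :
    ∀ (F : ℕ) (lam : ι → ℚ),
    (s.filter fun i => 0 < lam i ∧ lam i < 1).card = F →
    (∀ i ∈ s, 0 ≤ lam i ∧ lam i ≤ 1) →
    ∃ lam' : ι → ℚ, (∀ i ∈ s, 0 ≤ lam' i ∧ lam' i ≤ 1) ∧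
      (∑ i ∈ s, lam' i) = (∑ i ∈ s, lam i) ∧
      (∑ i ∈ s, lam' i • w i) = (∑ i ∈ s, lam i • w i) ∧
      (s.filter fun i => 0 < lam' i ∧ lam' i < 1).card ≤ Fintype.card κ + 1 := by
  intro F
  induction F using Nat.strong_induction_on with
  | _ F ih =>
  intro lam hF h01
  set r := Fintype.card κ with hr
  by_cases hFle : F ≤ r + 1
  · exact ⟨lam, h01, rfl, rfl, by rw [hF]; exact hFle⟩
  -- many fractional coordinates: find a relation
  · set fr := s.filter (fun i => 0 < lam i ∧ lam i < 1) with hfr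
    have hfrs : fr ⊆ s := Finset.filter_subset _ _
    have hcard : Module.finrank ℚ ((κ → ℚ) × ℚ) < Fintype.card ↥fr := by
      rw [Module.finrank_prod, Module.finrank_pi, Module.finrank_self]
      simp only [Fintype.card_coe]
      omega
    have hnli : ¬ LinearIndependent ℚ (fun i : ↥fr => ((w i, 1) : (κ → ℚ) × ℚ)) := by
      intro hli
      exact absurd hli.fintype_card_le_finrank (by omega)
    obtain ⟨g, hgsum, i₁, hgne⟩ := Fintype.not_linearIndependent_iff.1 hnli
    classical
    set μ : ι → ℚ := fun i => if h : i ∈ fr then g ⟨i, h⟩ else 0 with hμ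
    have hμfr : ∀ i (h : i ∈ fr), μ i = g ⟨i, h⟩ := by
      intro i h; simp [hμ, dif_pos h]
    have hμ0 : ∀ i, i ∉ fr → μ i = 0 := by
      intro i h; simp [hμ, dif_neg h]
    -- sums of μ
    have hkey : (∑ i ∈ fr, μ i • (w i, 1)) = (0 : (κ → ℚ) × ℚ) := by
      rw [← Finset.sum_coe_sort fr (fun i => μ i • ((w i, 1) : (κ → ℚ) × ℚ))]
      rw [← hgsum]
      apply Finset.sum_congr rfl
      intro i _
      rw [hμfr i.1 i.2]
    have hμw : (∑ i ∈ s, μ i • w i) = 0 := by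
      have h1 : (∑ i ∈ fr, μ i • w i) = 0 := by
        have h := congrArg Prod.fst hkey
        rw [Prod.fst_sum] at h
        simpa using h
      rw [← Finset.sum_subset hfrs (fun i _ hni => by rw [hμ0 i hni, zero_smul])]
      exact h1
    have hμsum : (∑ i ∈ s, μ i) = 0 := by
      have h1 : (∑ i ∈ fr, μ i) = 0 := by
        have h := congrArg Prod.snd hkey
        rw [Prod.snd_sum] at h
        simpa using h
      rw [← Finset.sum_subset hfrs (fun i _ hni => hμ0 i hni)]
      exact h1
    -- the step size
    set τ : ι → ℚ := fun i => if 0 < μ i then (1 - lam i) / μ i else lam i / (-μ i) with hτ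
    set tset := fr.filter (fun i => μ i ≠ 0) with htset
    have htne : tset.Nonempty := ⟨i₁.1, by
      rw [htset, Finset.mem_filter]
      exact ⟨i₁.2, by rw [hμfr i₁.1 i₁.2]; simpa using hgne⟩⟩
    obtain ⟨istar, histar, hmin⟩ := Finset.exists_min_image tset τ htne
    set t := τ istar with ht
    have hfr_mem : ∀ i ∈ tset, 0 < lam i ∧ lam i < 1 ∧ μ i ≠ 0 := by
      intro i hi
      rw [htset, Finset.mem_filter] at hi
      have h2 := hi.1
      rw [hfr, Finset.mem_filter] at h2
      exact ⟨h2.2.1, h2.2.2, hi.2⟩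
    have hτpos : ∀ i ∈ tset, 0 < τ i := by
      intro i hi
      obtain ⟨ha, hb, hc⟩ := hfr_mem i hi
      rw [hτ]
      by_cases hp : 0 < μ i
      · simp only [if_pos hp]
        apply div_pos (by linarith) hp
      · simp only [if_neg hp]
        have : μ i < 0 := lt_of_le_of_ne (not_lt.1 hp) hc
        apply div_pos ha (by linarith)
    have htpos : 0 < t := hτpos istar histar
    set lam' : ι → ℚ := fun i => lam i + t * μ i with hlam'
    -- bounds
    have hbnd : ∀ i ∈ s, 0 ≤ lam' i ∧ lam' i ≤ 1 := by
      intro i hi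
      by_cases hmu : μ i = 0
      · rw [hlam']; simp [hmu]; exact h01 i hi
      · have hifr : i ∈ fr := by
          by_contra hn; exact hmu (hμ0 i hn)
        have hits : i ∈ tset := by
          rw [htset, Finset.mem_filter]; exact ⟨hifr, hmu⟩
        obtain ⟨ha, hb, _⟩ := hfr_mem i hits
        have hti := hmin i hits
        show 0 ≤ lam i + t * μ i ∧ lam i + t * μ i ≤ 1
        rcases lt_or_gt_of_ne hmu with hneg | hpos
        · have hτi : τ i = lam i / (-μ i) := by
            rw [hτ]; simp only [if_neg (by linarith : ¬ 0 < μ i)]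
          have h2 : t * (-μ i) ≤ τ i * (-μ i) := by
            apply mul_le_mul_of_nonneg_right hti (by linarith)
          rw [hτi, div_mul_cancel₀ _ (by linarith : -μ i ≠ 0)] at h2
          have hprod : t * μ i < 0 := mul_neg_of_pos_of_neg htpos hneg
          constructor
          · linarith
          · linarith
        · have hτi : τ i = (1 - lam i) / μ i := by
            rw [hτ]; simp only [if_pos hpos]
          have h2 : t * μ i ≤ τ i * μ i := by
            apply mul_le_mul_of_nonneg_right hti (by linarith)
          rw [hτi, div_mul_cancel₀ _ (by linarith : μ i ≠ 0)] at h2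
          have hprod : 0 < t * μ i := mul_pos htpos hpos
          constructor
          · linarith
          · linarith
    -- sums preserved
    have hsum' : (∑ i ∈ s, lam' i) = ∑ i ∈ s, lam i := by
      rw [hlam']
      simp only []
      rw [Finset.sum_add_distrib, ← Finset.mul_sum, hμsum]
      ring
    have hlin' : (∑ i ∈ s, lam' i • w i) = ∑ i ∈ s, lam i • w i := by
      rw [hlam']
      simp only []
      have : ∀ i ∈ s, (lam i + t * μ i) • w i = lam i • w i + t • (μ i • w i) := by
        intro i _
        rw [add_smul, mul_smul]
      rw [Finset.sum_congr rfl this, Finset.sum_add_distrib, ← Finset.smul_sum, hμw]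
      simp
    -- fractional set decreased
    have hfrss : (s.filter fun i => 0 < lam' i ∧ lam' i < 1) ⊆ fr.erase istar := by
      intro i hi
      rw [Finset.mem_filter] at hi
      obtain ⟨his, hfrac⟩ := hi
      have hmune : i ∈ fr := by
        by_cases hmu : μ i = 0
        · rw [hfr, Finset.mem_filter]
          refine ⟨his, ?_⟩
          rw [hlam'] at hfrac
          simp [hmu] at hfrac
          exact hfrac
        · by_contra hn; exact hmu (hμ0 i hn)
      rw [Finset.mem_erase]
      refine ⟨?_, hmune⟩
      intro heq
      subst heq
      obtain ⟨ha, hb, hc⟩ := hfr_mem i histar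
      have hfrac' : 0 < lam i + t * μ i ∧ lam i + t * μ i < 1 := hfrac
      rcases lt_or_gt_of_ne hc with hneg | hpos
      · have hτi : τ i = lam i / (-μ i) := by
          rw [hτ]; simp only [if_neg (by linarith : ¬ 0 < μ i)]
        have hz : lam i + t * μ i = 0 := by
          rw [ht, hτi]
          have hcn : -μ i ≠ 0 := neg_ne_zero.2 hc
          field_simp
          try ring
        rw [hz] at hfrac'
        exact absurd hfrac'.1 (by norm_num)
      · have hτi : τ i = (1 - lam i) / μ i := by
          rw [hτ]; simp only [if_pos hpos]
        have hz : lam i + t * μ i = 1 := by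
          rw [ht, hτi]
          field_simp
          try ring
        rw [hz] at hfrac'
        exact absurd hfrac'.2 (by norm_num)
    have hcard' : (s.filter fun i => 0 < lam' i ∧ lam' i < 1).card < F := by
      calc (s.filter fun i => 0 < lam' i ∧ lam' i < 1).card
          ≤ (fr.erase istar).card := Finset.card_le_card hfrss
        _ < fr.card := Finset.card_erase_lt_of_mem (by
            rw [htset, Finset.mem_filter] at histar; exact histar.1)
        _ = F := by rw [← hF]
    obtain ⟨lam'', a1, a2, a3, a4⟩ := ih _ hcard' lam' rfl hbnd
    exact ⟨lam'', a1, a2.trans hsum', a3.trans hlin', a4⟩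

end FR
section Steinitz
variable {κ : Type*} [Fintype κ] {ι : Type*} [DecidableEq ι]

lemma pre_bound (w : ι → κ → ℚ) (δ : ℚ) :
    ∀ (l : List ι), (∀ i ∈ l, ∀ j, |w i j| ≤ δ) →
      ∀ j, |((l.map w).sum) j| ≤ l.length * δ := by
  intro l
  induction l with
  | nil => intro _ j; simp
  | cons a l ih =>
    intro h j
    have h1 : ((List.map w (a :: l)).sum) j = w a j + ((List.map w l).sum) j := by
      simp
    rw [h1]
    have h2 := (ih (fun i hi => h i (List.mem_cons_of_mem _ hi))) j
    have h3 := h a (List.mem_cons_self) j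
    calc |w a j + ((List.map w l).sum) j| ≤ |w a j| + |((List.map w l).sum) j| := abs_add_le _ _
      _ ≤ δ + l.length * δ := by linarith
      _ = (l.length + 1) * δ := by ring
      _ = ((a :: l).length : ℚ) * δ := by simp
    
lemma steinitz_order (δ : ℚ) (hδ : 0 ≤ δ) (w : ι → κ → ℚ) :
    ∀ (m : ℕ) (s : Finset ι), s.card = m →
    (∀ i ∈ s, ∀ j, |w i j| ≤ δ) →
    ∀ lam : ι → ℚ, (∀ i ∈ s, 0 ≤ lam i ∧ lam i ≤ 1) →
    (∑ i ∈ s, lam i) = (m : ℚ) - ((Fintype.card κ : ℚ) + 2) →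
    (∑ i ∈ s, lam i • w i) = 0 →
    ∃ ord : List ι, ord.Nodup ∧ ord.toFinset = s ∧
      ∀ k j, |(((ord.take k).map w).sum) j| ≤ ((Fintype.card κ : ℚ) + 2) * δ := by
  intro m
  induction m using Nat.strong_induction_on with
  | _ m ih =>
  intro s hs hw lam h01 hsum hlin
  set r := Fintype.card κ with hr
  by_cases hm : m ≤ r + 2
  · -- base case: any order works
    refine ⟨s.toList, Finset.nodup_toList s, Finset.toList_toFinset s, ?_⟩
    intro k j
    have hmem : ∀ i ∈ s.toList.take k, ∀ j, |w i j| ≤ δ := by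
      intro i hi
      exact hw i (Finset.mem_toList.1 ((List.take_sublist _ _).subset hi))
    have h1 := pre_bound w δ (s.toList.take k) hmem j
    have h2 : (s.toList.take k).length ≤ m := by
      rw [List.length_take]
      have : s.toList.length = m := by rw [Finset.length_toList, hs]
      omega
    calc |(((s.toList.take k).map w).sum) j| ≤ (s.toList.take k).length * δ := h1
      _ ≤ ((r : ℚ) + 2) * δ := by
          apply mul_le_mul_of_nonneg_right _ hδ
          have : ((s.toList.take k).length : ℚ) ≤ (m : ℚ) := by exact_mod_cast h2
          have hm' : (m : ℚ) ≤ (r : ℚ) + 2 := by exact_mod_cast hm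
          linarith
  · -- inductive case
    push_neg at hm
    obtain ⟨lam', a1, a2, a3, a4⟩ := FR s w _ lam rfl h01
    rw [hsum] at a2
    rw [hlin] at a3
    -- find a zero coordinate
    set zs := s.filter (fun i => lam' i = 0) with hzs
    set ones := s.filter (fun i => lam' i = 1) with hones
    set frs := s.filter (fun i => 0 < lam' i ∧ lam' i < 1) with hfrs
    have hcover : s ⊆ zs ∪ ones ∪ frs := by
      intro i hi
      obtain ⟨hge, hle⟩ := a1 i hi
      simp only [hzs, hones, hfrs, Finset.mem_union, Finset.mem_filter]
      rcases eq_or_lt_of_le hge with h0 | h0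
      · exact Or.inl (Or.inl ⟨hi, h0.symm⟩)
      · rcases eq_or_lt_of_le hle with h1 | h1
        · exact Or.inl (Or.inr ⟨hi, h1⟩)
        · exact Or.inr ⟨hi, h0, h1⟩
    have hcardsum : m ≤ zs.card + ones.card + frs.card := by
      calc m = s.card := hs.symm
        _ ≤ (zs ∪ ones ∪ frs).card := Finset.card_le_card hcover
        _ ≤ (zs ∪ ones).card + frs.card := Finset.card_union_le _ _
        _ ≤ zs.card + ones.card + frs.card := by
            have := Finset.card_union_le zs ones
            omega
    have honesb : ones.card + (r + 2) ≤ m := by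
      have e1 : (∑ i ∈ ones, lam' i) = (ones.card : ℚ) := by
        rw [Finset.sum_congr rfl (fun i hi => (Finset.mem_filter.1 hi).2)]
        simp
        rfl
      have e2 : (∑ i ∈ ones, lam' i) ≤ ∑ i ∈ s, lam' i := by
        apply Finset.sum_le_sum_of_subset_of_nonneg (Finset.filter_subset _ _)
        intro i hi _
        exact (a1 i hi).1
      rw [e1, a2] at e2
      have : ((ones.card + (r + 2) : ℕ) : ℚ) ≤ (m : ℚ) := by push_cast; linarith
      exact_mod_cast this
    have hzsne : zs.Nonempty := by
      rw [← Finset.card_pos]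
      omega
    obtain ⟨i₀, hi₀⟩ := hzsne
    have hi₀s : i₀ ∈ s := (Finset.mem_filter.1 hi₀).1
    have hi₀z : lam' i₀ = 0 := (Finset.mem_filter.1 hi₀).2
    set s' := s.erase i₀ with hs'def
    have hs' : s'.card = m - 1 := by
      rw [hs'def, Finset.card_erase_of_mem hi₀s, hs]
    have hdenpos : (0 : ℚ) < (m : ℚ) - ((r : ℚ) + 2) := by
      have : ((r + 2 : ℕ) : ℚ) < (m : ℚ) := by exact_mod_cast hm
      push_cast at this
      linarith
    set c := ((m : ℚ) - 1 - ((r : ℚ) + 2)) / ((m : ℚ) - ((r : ℚ) + 2)) with hc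
    have hc0 : 0 ≤ c := by
      apply div_nonneg _ (le_of_lt hdenpos)
      have : ((r + 2 : ℕ) : ℚ) + 1 ≤ (m : ℚ) := by exact_mod_cast hm
      push_cast at this
      linarith
    have hc1 : c ≤ 1 := by
      rw [hc, div_le_one hdenpos]
      linarith
    set lam'' : ι → ℚ := fun i => c * lam' i with hlam''
    have h01'' : ∀ i ∈ s', 0 ≤ lam'' i ∧ lam'' i ≤ 1 := by
      intro i hi
      have his : i ∈ s := Finset.mem_of_mem_erase hi
      obtain ⟨hge, hle⟩ := a1 i his
      constructor
      · exact mul_nonneg hc0 hge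
      · show c * lam' i ≤ 1
        have : c * lam' i ≤ 1 * 1 := mul_le_mul hc1 hle hge (by norm_num)
        linarith
    have hsum'' : (∑ i ∈ s', lam'' i) = ((m - 1 : ℕ) : ℚ) - ((r : ℚ) + 2) := by
      have e1 : (∑ i ∈ s', lam' i) = (∑ i ∈ s, lam' i) - lam' i₀ :=
        Finset.sum_erase_eq_sub hi₀s
      have : (∑ i ∈ s', lam'' i) = c * ((m : ℚ) - ((r : ℚ) + 2)) := by
        rw [hlam'']
        simp only []
        rw [← Finset.mul_sum, e1, hi₀z, a2]
        ring_nf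
      rw [this, hc, div_mul_cancel₀ _ (ne_of_gt hdenpos)]
      have hm1 : ((m - 1 : ℕ) : ℚ) = (m : ℚ) - 1 := by
        have : 1 ≤ m := by omega
        push_cast [this]
        ring
      rw [hm1]
      try ring
    have hlin'' : (∑ i ∈ s', lam'' i • w i) = 0 := by
      have e1 : (∑ i ∈ s', lam' i • w i) = (∑ i ∈ s, lam' i • w i) - lam' i₀ • w i₀ :=
        Finset.sum_erase_eq_sub hi₀s
      have : (∑ i ∈ s', lam'' i • w i) = c • (∑ i ∈ s', lam' i • w i) := by
        rw [Finset.smul_sum]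
        apply Finset.sum_congr rfl
        intro i _
        rw [hlam'']
        simp only []
        rw [mul_smul]
      rw [this, e1, a3, hi₀z]
      simp
    have hw' : ∀ i ∈ s', ∀ j, |w i j| ≤ δ := fun i hi => hw i (Finset.mem_of_mem_erase hi)
    obtain ⟨ord', n1, n2, n3⟩ := ih (m - 1) (by omega) s' hs' hw' lam'' h01'' hsum'' hlin''
    have hi₀no : i₀ ∉ ord' := by
      intro h
      have : i₀ ∈ s' := by rw [← n2]; exact List.mem_toFinset.2 h
      exact Finset.notMem_erase i₀ s this
    refine ⟨ord' ++ [i₀], ?_, ?_, ?_⟩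
    · rw [List.nodup_append]
      exact ⟨n1, List.nodup_singleton i₀, by
        rintro a ha b hb rfl
        simp at hb
        subst hb
        exact hi₀no ha⟩
    · rw [List.toFinset_append, n2]
      have hsing : ([i₀] : List ι).toFinset = {i₀} := by simp
      rw [hsing, hs'def, Finset.union_comm]
      rw [show ({i₀} : Finset ι) ∪ s.erase i₀ = insert i₀ (s.erase i₀) by ext a; simp]
      exact Finset.insert_erase hi₀s
    · intro k j
      by_cases hk : k ≤ ord'.length
      · rw [List.take_append_of_le_length hk]
        exact n3 k j
      · have hfull : (ord' ++ [i₀]).take k = ord' ++ [i₀] := by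
          apply List.take_of_length_le
          simp
          omega
        rw [hfull]
        have hord : ((ord' ++ [i₀]).map w).sum = ∑ i ∈ s, w i := by
          have hnd : (ord' ++ [i₀]).Nodup := by
            rw [List.nodup_append]
            exact ⟨n1, List.nodup_singleton i₀, by
              rintro a ha b hb rfl
              simp at hb
              subst hb
              exact hi₀no ha⟩
          have htf : (ord' ++ [i₀]).toFinset = s := by
            rw [List.toFinset_append, n2]
            have hsing : ([i₀] : List ι).toFinset = {i₀} := by simp
            rw [hsing, hs'def, Finset.union_comm]
            rw [show ({i₀} : Finset ι) ∪ s.erase i₀ = insert i₀ (s.erase i₀) by ext a; simp]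
            exact Finset.insert_erase hi₀s
          rw [← List.sum_toFinset w hnd, htf]
        rw [hord]
        -- bound the full sum
        have hsplit : (∑ i ∈ s, w i) = (∑ i ∈ s, (1 - lam' i) • w i) + ∑ i ∈ s, lam' i • w i := by
          rw [← Finset.sum_add_distrib]
          apply Finset.sum_congr rfl
          intro i _
          rw [← add_smul]
          simp
        rw [a3, add_zero] at hsplit
        rw [hsplit]
        have happ : (∑ i ∈ s, (1 - lam' i) • w i) j = ∑ i ∈ s, (1 - lam' i) * w i j := by
          rw [Finset.sum_apply]
          apply Finset.sum_congr rfl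
          intro i _
          simp
        rw [happ]
        calc |∑ i ∈ s, (1 - lam' i) * w i j| ≤ ∑ i ∈ s, |(1 - lam' i) * w i j| :=
            Finset.abs_sum_le_sum_abs _ _
          _ ≤ ∑ i ∈ s, (1 - lam' i) * δ := by
              apply Finset.sum_le_sum
              intro i hi
              rw [abs_mul, abs_of_nonneg (by linarith [(a1 i hi).2] : (0:ℚ) ≤ 1 - lam' i)]
              exact mul_le_mul_of_nonneg_left (hw i hi j) (by linarith [(a1 i hi).2])
          _ = ((r : ℚ) + 2) * δ := by
              rw [← Finset.sum_mul]
              congr 1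
              rw [Finset.sum_sub_distrib, a2]
              simp [hs]
              try ring
end Steinitz
section SmallRep
variable {d : ℕ} {α : Type*}

lemma natAbs_le_vnorm (x : Vec d) (i : Fin d) : (x i).natAbs ≤ vnorm x :=
  Finset.le_sup (f := fun i => (x i).natAbs) (Finset.mem_univ i)

lemma sum_get {M : Type*} [AddCommMonoid M] (l : List α) (f : α → M) :
    ∑ i : Fin l.length, f (l.get i) = (l.map f).sum := by
  have h1 : (List.ofFn fun i => f (l.get i)) = List.map f l := by
    rw [show (fun i => f (l.get i)) = f ∘ l.get from rfl, ← List.map_ofFn, List.ofFn_get]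
  rw [← List.sum_ofFn, h1]

lemma map_sub_const_sum {ι κ : Type*} (t : List ι) (f : ι → κ → ℚ) (c : κ → ℚ) :
    (t.map (fun i => f i - c)).sum = (t.map f).sum - t.length • c := by
  induction t with
  | nil => simp
  | cons a t iht =>
    simp only [List.map_cons, List.sum_cons, iht, List.length_cons]
    rw [succ_nsmul]
    abel

lemma list_sum_apply {β : Type*} (t : List (β → ℚ)) (j : β) :
    t.sum j = (t.map (fun f => f j)).sum := by
  induction t with
  | nil => rfl
  | cons a t iht =>
    simp only [List.sum_cons, List.map_cons]
    rw [← iht]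
    rfl

lemma smallrep (vec : α → Vec d) (W : Submodule ℚ (Fin d → ℚ)) (R : Finset (Fin d))
    (hinj : ∀ x : Vec d, toQ x ∈ W → (∀ i ∈ R, x i = 0) → x = 0)
    (Δ ρE : ℕ) (hΔ : 1 ≤ Δ) :
    ∀ (n : ℕ) (l : List α), l.length = n →
    (∀ x ∈ l, toQ (vec x) ∈ W ∧ vnorm (vec x) ≤ Δ) →
    (∀ i : Fin d, (((l.map vec).sum) i).natAbs ≤ ρE) →
    ∃ l' : List α, (∀ x ∈ l', x ∈ l) ∧ (l'.map vec).sum = (l.map vec).sum ∧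
      l'.length ≤ (2 * (ρE + (2 * R.card + 4) * Δ) + 1) ^ R.card := by
  intro n
  induction n using Nat.strong_induction_on with
  | _ n ih =>
  intro l hn hmem hE
  subst hn
  set r := R.card with hrdef
  set ρ := ρE + (2 * r + 4) * Δ with hρdef
  set B := (2 * ρ + 1) ^ r with hBdef
  by_cases hL : l.length ≤ B
  · exact ⟨l, fun x hx => hx, rfl, hL⟩
  push_neg at hL
  have hρbig : 2 * r + 4 ≤ ρ := by
    have : (2 * r + 4) * 1 ≤ (2 * r + 4) * Δ := by
      apply Nat.mul_le_mul_left
      omega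
    omega
  have hBr : r + 1 ≤ B := by
    rcases Nat.eq_zero_or_pos r with h0 | hpos
    · rw [hBdef, h0]; simp
    · have h1 : 2 * ρ + 1 ≤ B := Nat.le_self_pow (by omega) _
      omega
  have hnr : r + 2 ≤ l.length := by omega
  have hnpos : 0 < l.length := by omega
  -- rational data
  set E : Vec d := (l.map vec).sum with hEdef
  set n := l.length with hndef
  set vq : Fin l.length → (↥R → ℚ) := fun i j => toQ (vec (l.get i)) j.1 with hvq
  set cE : ↥R → ℚ := fun j => toQ E j.1 / (n : ℚ) with hcE
  set w : Fin l.length → (↥R → ℚ) := fun i => vq i - cE with hw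
  set δ : ℚ := 2 * (Δ : ℚ) with hδdef
  have hδ0 : 0 ≤ δ := by rw [hδdef]; positivity
  -- coordinate bounds
  have habs_vec : ∀ (x : α), x ∈ l → ∀ i : Fin d, |toQ (vec x) i| ≤ (Δ : ℚ) := by
    intro x hx i
    have h1 : ((vec x) i).natAbs ≤ Δ := le_trans (natAbs_le_vnorm _ _) (hmem x hx).2
    rw [toQ]
    rw [← Int.cast_abs]
    have : |(vec x) i| ≤ (Δ : ℤ) := by
      rw [Int.abs_eq_natAbs]
      exact_mod_cast h1
    exact_mod_cast this
  have habs_E : ∀ i : Fin d, |toQ E i| ≤ (ρE : ℚ) := by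
    intro i
    have h1 := hE i
    rw [toQ, ← Int.cast_abs]
    have : |E i| ≤ (ρE : ℤ) := by
      rw [Int.abs_eq_natAbs]
      exact_mod_cast h1
    exact_mod_cast this
  have habs_cE : ∀ j : ↥R, |cE j| ≤ (Δ : ℚ) := by
    intro j
    rw [hcE]
    simp only []
    rw [abs_div, abs_of_nonneg (by positivity : (0:ℚ) ≤ (n:ℚ))]
    rw [div_le_iff₀ (by exact_mod_cast hnpos)]
    have h1 : |toQ E j.1| ≤ (ρE : ℚ) := habs_E j.1
    -- |E j| ≤ n * Δ  (sum of n vectors each bounded by Δ)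
    have h2 : |toQ E j.1| ≤ (n : ℚ) * (Δ : ℚ) := by
      rw [hEdef, toQ_list_sum]
      have : ∀ (t : List α), (∀ x ∈ t, x ∈ l) →
          |(((t.map vec).map toQ).sum) j.1| ≤ (t.length : ℚ) * (Δ : ℚ) := by
        intro t
        induction t with
        | nil => intro _; simp
        | cons a t iht =>
          intro hsub
          have h3 : ((((a :: t).map vec).map toQ).sum) j.1
              = toQ (vec a) j.1 + (((t.map vec).map toQ).sum) j.1 := by simp
          rw [h3]
          have h4 := iht (fun x hx => hsub x (List.mem_cons_of_mem _ hx))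
          have h5 := habs_vec a (hsub a (List.mem_cons_self)) j.1
          calc |toQ (vec a) j.1 + (((t.map vec).map toQ).sum) j.1|
              ≤ |toQ (vec a) j.1| + |(((t.map vec).map toQ).sum) j.1| := abs_add_le _ _
            _ ≤ (Δ : ℚ) + (t.length : ℚ) * (Δ : ℚ) := by linarith
            _ = ((a :: t).length : ℚ) * (Δ : ℚ) := by simp; ring
      exact this l (fun x hx => hx)
    rw [mul_comm]
    exact h2
  have hwbound : ∀ i ∈ (Finset.univ : Finset (Fin l.length)), ∀ j : ↥R, |w i j| ≤ δ := by
    intro i _ j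
    rw [hw]
    have h1 := habs_vec (l.get i) (List.get_mem l i) j.1
    have h2 := habs_cE j
    show |vq i j - cE j| ≤ δ
    rw [hδdef]
    have h4 : |vq i j - cE j| ≤ |vq i j| + |cE j| := abs_sub _ _
    have h5 : |vq i j| ≤ (Δ : ℚ) := h1
    linarith
  -- the lam function
  set lam : Fin l.length → ℚ := fun _ => ((n : ℚ) - ((r : ℚ) + 2)) / (n : ℚ) with hlam
  have hnQ : (0:ℚ) < (n:ℚ) := by exact_mod_cast hnpos
  have hrn : (r : ℚ) + 2 ≤ (n : ℚ) := by exact_mod_cast hnr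
  have h01 : ∀ i ∈ (Finset.univ : Finset (Fin l.length)), 0 ≤ lam i ∧ lam i ≤ 1 := by
    intro i _
    constructor
    · apply div_nonneg (by linarith) (le_of_lt hnQ)
    · rw [div_le_one hnQ]; linarith
  have hcard_univ : (Finset.univ : Finset (Fin l.length)).card = n := by simp [hndef]
  have hsum : (∑ i : Fin l.length, lam i) = (n : ℚ) - ((Fintype.card ↥R : ℚ) + 2) := by
    rw [Finset.sum_const, hcard_univ, nsmul_eq_mul,
      mul_div_cancel₀ _ (ne_of_gt hnQ), Fintype.card_coe]
  have hsumw : (∑ i : Fin l.length, w i) = 0 := by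
    rw [hw]
    have h1 : (∑ i : Fin l.length, (vq i - cE)) = (∑ i : Fin l.length, vq i) - n • cE := by
      rw [Finset.sum_sub_distrib]
      congr 1
      rw [Finset.sum_const, hcard_univ]
    rw [h1]
    have h2 : (∑ i : Fin l.length, vq i) = fun j : ↥R => toQ E j.1 := by
      funext j
      rw [Finset.sum_apply]
      have h3 : (∑ i : Fin l.length, vq i j) = ∑ i : Fin l.length, toQ (vec (l.get i)) j.1 := rfl
      have h4 := sum_get l (fun x => toQ (vec x) j.1)
      rw [h3, h4, hEdef, toQ_list_sum, list_sum_apply, List.map_map, List.map_map]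
      try rfl
    rw [h2]
    funext j
    have : (n • cE) j = (n : ℚ) * cE j := by
      simp [nsmul_eq_mul]
    simp only [Pi.sub_apply, Pi.zero_apply, this]
    rw [hcE]
    simp only []
    rw [mul_div_cancel₀ _ (ne_of_gt hnQ)]
    ring
  have hlin : (∑ i : Fin l.length, lam i • w i) = 0 := by
    have h1 : ∀ i : Fin l.length, lam i • w i = (((n : ℚ) - ((r : ℚ) + 2)) / (n : ℚ)) • w i :=
      fun i => rfl
    rw [Finset.sum_congr rfl (fun i _ => h1 i), ← Finset.smul_sum, hsumw]
    simp
  obtain ⟨ord, hnodup, htfin, hpre⟩ :=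
    steinitz_order (κ := ↥R) (ι := Fin l.length) δ hδ0 w n Finset.univ hcard_univ
      hwbound lam h01 hsum hlin
  have hordlen : ord.length = n := by
    have h1 : ord.toFinset.card = ord.length := List.toFinset_card_of_nodup hnodup
    rw [htfin, hcard_univ] at h1
    omega
  -- integer prefix sums
  set pInt : ℕ → Vec d := fun k => (((ord.take k).map (fun i => vec (l.get i)))).sum with hpInt
  have hpbox : ∀ k, k ≤ n → ∀ j : ↥R, (pInt k j.1).natAbs ≤ ρ := by
    intro k hk j
    -- rational computation
    have hlen_take : (ord.take k).length = k := by
      rw [List.length_take, hordlen]; omega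
    have h1 : toQ (pInt k) j.1 = (((ord.take k).map vq).sum) j := by
      have hLHS : toQ ((((ord.take k).map (fun i => vec (l.get i)))).sum) j.1
          = ((ord.take k).map (fun i => toQ (vec (l.get i)) j.1)).sum := by
        rw [toQ_list_sum, list_sum_apply, List.map_map, List.map_map]
        try rfl
      have hRHS : (((ord.take k).map vq).sum) j
          = ((ord.take k).map (fun i => toQ (vec (l.get i)) j.1)).sum := by
        rw [list_sum_apply, List.map_map]
        try rfl
      exact hRHS ▸ hLHS
    have h2 : (((ord.take k).map vq).sum) = (((ord.take k).map w).sum) + (k : ℕ) • cE := by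
      have h3 : (((ord.take k).map w).sum) = (((ord.take k).map vq).sum) - (ord.take k).length • cE := by
        rw [hw]
        exact map_sub_const_sum (ord.take k) vq cE
      rw [h3, hlen_take]
      abel
    have h4 : |(((ord.take k).map w).sum) j| ≤ ((r : ℚ) + 2) * δ := by
      have := hpre k j
      rw [Fintype.card_coe] at this
      exact this
    have h5 : |(k : ℕ) • cE j| ≤ (ρE : ℚ) := by
      rw [nsmul_eq_mul, hcE]
      simp only []
      rw [abs_mul, abs_div]
      rw [abs_of_nonneg (by positivity : (0:ℚ) ≤ (k:ℚ)),
        abs_of_nonneg (by positivity : (0:ℚ) ≤ (n:ℚ))]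
      have h6 := habs_E j.1
      have h7 : (k : ℚ) / (n : ℚ) ≤ 1 := by
        rw [div_le_one hnQ]
        exact_mod_cast hk
      calc (k : ℚ) * (|toQ E j.1| / (n : ℚ)) = ((k : ℚ) / (n : ℚ)) * |toQ E j.1| := by ring
        _ ≤ 1 * (ρE : ℚ) := by
            apply mul_le_mul h7 h6 (abs_nonneg _) (by norm_num)
        _ = (ρE : ℚ) := by ring
    have h8 : |toQ (pInt k) j.1| ≤ (ρ : ℚ) := by
      rw [h1, h2]
      have h9 : ((((ord.take k).map w).sum) + (k : ℕ) • cE) j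
          = (((ord.take k).map w).sum) j + (k : ℕ) • cE j := rfl
      rw [h9]
      have h10 : |(((ord.take k).map w).sum) j + (k : ℕ) • cE j|
          ≤ |(((ord.take k).map w).sum) j| + |(k : ℕ) • cE j| := abs_add_le _ _
      have h11 : ((r : ℚ) + 2) * δ + (ρE : ℚ) ≤ (ρ : ℚ) := by
        rw [hδdef, hρdef]
        push_cast
        ring_nf
        nlinarith
      linarith
    have h12 : |pInt k j.1| ≤ (ρ : ℤ) := by
      have : |toQ (pInt k) j.1| = ((|pInt k j.1| : ℤ) : ℚ) := by
        rw [toQ, Int.cast_abs]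
      rw [this] at h8
      exact_mod_cast h8
    rw [Int.abs_eq_natAbs] at h12
    exact_mod_cast h12
  -- pigeonhole
  set box := Fintype.piFinset (fun _ : ↥R => Finset.Icc (-(ρ : ℤ)) (ρ : ℤ)) with hbox
  have hboxcard : box.card = (2 * ρ + 1) ^ r := by
    rw [hbox, Fintype.card_piFinset]
    have h1 : ∀ j : ↥R, (Finset.Icc (-(ρ : ℤ)) (ρ : ℤ)).card = 2 * ρ + 1 := by
      intro j
      rw [Int.card_Icc]
      have : (ρ : ℤ) + 1 - (-(ρ : ℤ)) = (2 * ρ + 1 : ℕ) := by push_cast; ring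
      rw [this, Int.toNat_natCast]
    rw [Finset.prod_congr rfl (fun j _ => h1 j), Finset.prod_const, Finset.card_univ,
      Fintype.card_coe]
  set P : Fin (n + 1) → (↥R → ℤ) := fun k => fun j => pInt k.1 j.1 with hP
  obtain ⟨a, _, b, _, hab, hPab⟩ :
      ∃ a ∈ (Finset.univ : Finset (Fin (n+1))), ∃ b ∈ (Finset.univ : Finset (Fin (n+1))),
        a ≠ b ∧ P a = P b := by
    apply Finset.exists_ne_map_eq_of_card_lt_of_maps_to (t := box)
    · rw [hboxcard]
      simp only [Finset.card_univ, Fintype.card_fin]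
      omega
    · intro k _
      rw [hbox, Finset.mem_coe, Fintype.mem_piFinset]
      intro j
      rw [Finset.mem_Icc]
      have h1 := hpbox k.1 (Nat.lt_succ_iff.1 k.2) j
      have h2 : |pInt k.1 j.1| ≤ (ρ : ℤ) := by
        rw [Int.abs_eq_natAbs]
        exact_mod_cast h1
      exact abs_le.1 h2
  -- order a < b
  have hcases : ∃ a' b' : ℕ, a' < b' ∧ b' ≤ n ∧
      (∀ j : ↥R, pInt a' j.1 = pInt b' j.1) := by
    rcases lt_or_gt_of_ne hab with h | h
    · exact ⟨a.1, b.1, h, by omega, fun j => congrFun hPab j⟩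
    · exact ⟨b.1, a.1, h, by omega, fun j => (congrFun hPab j).symm⟩
  obtain ⟨a', b', hab', hb'n, hPeq⟩ := hcases
  -- the chunk sums to zero
  set chunk := (ord.drop a').take (b' - a') with hchunk
  set schunk : Vec d := ((chunk.map (fun i => vec (l.get i)))).sum with hschunk
  have hsplit : ord.take b' = ord.take a' ++ chunk := by
    have := List.take_add (l := ord) (i := a') (j := b' - a')
    rw [show a' + (b' - a') = b' by omega] at this
    exact this
  have hpadd : pInt b' = pInt a' + schunk := by
    show ((ord.take b').map (fun i => vec (l.get i))).sum = _
    rw [hsplit, List.map_append, List.sum_append]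
    try rfl
  have hchunk0 : schunk = 0 := by
    apply hinj
    · rw [hschunk, toQ_list_sum]
      apply list_sum_mem
      intro x hx
      simp only [List.map_map, List.mem_map] at hx
      obtain ⟨i, hi, hix⟩ := hx
      rw [← hix]
      exact (hmem (l.get i) (List.get_mem l i)).1
    · intro i hi
      have h1 := hPeq ⟨i, hi⟩
      have h2 : pInt b' i = pInt a' i + schunk i := by
        rw [hpadd]; rfl
      simp only [] at h1
      omega
  -- the shorter list
  set l'' := (ord.take a' ++ ord.drop b').map (fun i => l.get i) with hl''
  have hmem'' : ∀ x ∈ l'', x ∈ l := by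
    intro x hx
    rw [hl''] at hx
    obtain ⟨i, _, hix⟩ := List.mem_map.1 hx
    rw [← hix]
    exact List.get_mem l i
  have hordsum : ((ord.map (fun i => vec (l.get i))).sum) = E := by
    rw [← List.sum_toFinset _ hnodup, htfin, hEdef]
    exact sum_get l vec
  have hsum'' : (l''.map vec).sum = E := by
    rw [hl'', List.map_map]
    have h2 : pInt b' + ((ord.drop b').map (fun i => vec (l.get i))).sum = E := by
      rw [← hordsum]
      conv_rhs => rw [← List.take_append_drop b' ord]
      rw [List.map_append, List.sum_append]
      try rfl
    have h3 : ((ord.take a' ++ ord.drop b').map (fun i => vec (l.get i))).sum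
        = pInt a' + ((ord.drop b').map (fun i => vec (l.get i))).sum := by
      rw [List.map_append, List.sum_append]
      try rfl
    rw [hpadd, hchunk0, add_zero] at h2
    exact h3.trans h2
  have hlen'' : l''.length < l.length := by
    rw [hl'']
    simp only [List.length_map, List.length_append, List.length_take, List.length_drop, hordlen]
    omega
  obtain ⟨l', c1, c2, c3⟩ := ih l''.length hlen'' l'' rfl
    (fun x hx => hmem x (hmem'' x hx))
    (by rw [hsum'']; exact hE)
  exact ⟨l', fun x hx => hmem'' x (c1 x hx), by rw [c2, hsum''], c3⟩

end SmallRep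
section Assembly
variable {d : ℕ}

lemma vnorm_le_of_natAbs {x : Vec d} {K : ℕ} (h : ∀ i, (x i).natAbs ≤ K) : vnorm x ≤ K :=
  Finset.sup_le (fun i _ => h i)

lemma vnorm_tnorm_le {T : Finset (Trans d)} {t : Trans d} (ht : t ∈ T) :
    vnorm t.2.1 ≤ tnorm T := Finset.le_sup (f := fun t => vnorm t.2.1) ht

lemma disp_bound {T : Finset (Trans d)} (l : List (Trans d)) (h : ∀ t ∈ l, t ∈ T)
    (i : Fin d) : (disp l i).natAbs ≤ l.length * tnorm T := by
  induction l with
  | nil => simp [disp]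
  | cons t l ih =>
    have h1 : disp (t :: l) = t.2.1 + disp l := by
      simp [disp]
    have h2 : (disp (t :: l) i).natAbs ≤ (t.2.1 i).natAbs + (disp l i).natAbs := by
      rw [h1]
      exact Int.natAbs_add_le _ _
    have h3 : (t.2.1 i).natAbs ≤ tnorm T :=
      le_trans (natAbs_le_vnorm _ _) (vnorm_tnorm_le (h t (List.mem_cons_self)))
    have h4 := ih (fun s hs => h s (List.mem_cons_of_mem _ hs)) 
    simp only [List.length_cons]
    calc (disp (t :: l) i).natAbs ≤ (t.2.1 i).natAbs + (disp l i).natAbs := h2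
      _ ≤ tnorm T + l.length * tnorm T := by omega
      _ = (l.length + 1) * tnorm T := by ring
lemma final_arith (N n M rc d S uv : ℕ)
    (hN2 : 2 ≤ N) (hd : 1 ≤ d) (hb1 : n + 1 ≤ N) (hMN : M ≤ N) (huv : uv ≤ N)
    (hrc : rc ≤ N) (hrcd : rc ≤ d)
    (hS : S ≤ (2*((uv + (n+1)^2*M) + (2*rc+4)*((n+1)*M+1))+1)^rc * (n+1) + (n+1)^2) :
    S ≤ N^(12*d) := by
  have hN1 : 1 ≤ N := by omega
  have hΔle : (n+1)*M+1 ≤ N^3 := by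
    have h1 : (n+1)*M ≤ N*N := Nat.mul_le_mul hb1 hMN
    have h2 : N*N + 1 ≤ N*N*N := by
      have ha : 1 ≤ N*N := Nat.one_le_iff_ne_zero.2 (by positivity)
      have hb : 2*(N*N) ≤ N*(N*N) := Nat.mul_le_mul_right _ hN2
      have hc : N*(N*N) = N*N*N := by ring
      omega
    calc (n+1)*M+1 ≤ N*N + 1 := by omega
      _ ≤ N*N*N := h2
      _ = N^3 := by ring
  have hρEle : uv + (n+1)^2*M ≤ N^4 := by
    have h1 : (n+1)^2 ≤ N*N := by
      calc (n+1)^2 = (n+1)*(n+1) := by ring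
        _ ≤ N*N := Nat.mul_le_mul hb1 hb1
    have h2 : (n+1)^2*M ≤ (N*N)*N := Nat.mul_le_mul h1 hMN
    have h4 : N + N*N*N ≤ N*N*N*N := by
      have ha : N ≤ N*N*N := by
        calc N = N*1*1 := by ring
          _ ≤ N*N*N := Nat.mul_le_mul (Nat.mul_le_mul le_rfl hN1) hN1
      have hb : 2*(N*N*N) ≤ N*(N*N*N) := Nat.mul_le_mul_right _ hN2
      have hc : N*(N*N*N) = N*N*N*N := by ring
      omega
    calc uv + (n+1)^2*M ≤ N + (N*N)*N := by omega
      _ ≤ N*N*N*N := h4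
      _ = N^4 := by ring
  have hc24 : 2*rc + 4 ≤ 4*N := by omega
  have hinner : (uv + (n+1)^2*M) + (2*rc+4)*((n+1)*M+1) ≤ N^7 := by
    have h1 : (2*rc+4)*((n+1)*M+1) ≤ (4*N)*N^3 := Nat.mul_le_mul hc24 hΔle
    have h2 : (4*N)*N^3 = 4*N^4 := by ring
    have h3 : 8 ≤ N^3 := by
      calc (8:ℕ) = 2^3 := by norm_num
        _ ≤ N^3 := Nat.pow_le_pow_left hN2 3
    have h4 : 5*N^4 ≤ N^3*N^4 := Nat.mul_le_mul_right _ (by omega)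
    have h5 : N^3*N^4 = N^7 := by ring
    omega
  have hbase : 2*((uv + (n+1)^2*M) + (2*rc+4)*((n+1)*M+1))+1 ≤ N^9 := by
    have h1 : 1 ≤ N^7 := Nat.one_le_pow _ _ (by omega)
    have h2 : 4*N^7 ≤ N^2*N^7 := Nat.mul_le_mul_right _ (by
      calc (4:ℕ) = 2^2 := by norm_num
        _ ≤ N^2 := Nat.pow_le_pow_left hN2 2)
    have h3 : N^2*N^7 = N^9 := by ring
    omega
  have hBle : (2*((uv + (n+1)^2*M) + (2*rc+4)*((n+1)*M+1))+1)^rc ≤ N^(9*d) := by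
    calc (2*((uv + (n+1)^2*M) + (2*rc+4)*((n+1)*M+1))+1)^rc ≤ (N^9)^rc :=
          Nat.pow_le_pow_left hbase _
      _ ≤ (N^9)^d := Nat.pow_le_pow_right (Nat.one_le_pow _ _ (by omega)) hrcd
      _ = N^(9*d) := by rw [← pow_mul]
  have h1 : (n+1)^2 ≤ N^2 := by
    calc (n+1)^2 = (n+1)*(n+1) := by ring
      _ ≤ N*N := Nat.mul_le_mul hb1 hb1
      _ = N^2 := by ring
  have h2 : (2*((uv + (n+1)^2*M) + (2*rc+4)*((n+1)*M+1))+1)^rc * (n+1) ≤ N^(9*d) * N :=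
    Nat.mul_le_mul hBle hb1
  have h3 : N^(9*d) * N = N^(9*d+1) := by rw [pow_succ]
  have h4 : N^2 ≤ N^(9*d+1) := Nat.pow_le_pow_right hN1 (by omega)
  have h5 : N^(9*d+1) + N^(9*d+1) ≤ N^(9*d+2) := by
    have h6 : N^(9*d+2) = N^(9*d+1) * N := by rw [pow_succ]
    have h8 : 2*(N^(9*d+1)) ≤ N^(9*d+1) * N := by
      rw [mul_comm (N^(9*d+1)) N]
      exact Nat.mul_le_mul_right _ hN2
    omega
  have h7 : N^(9*d+2) ≤ N^(12*d) := Nat.pow_le_pow_right hN1 (by omega)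
  omega

end Assembly

theorem statement18_aux : ∀ d : ℕ, 1 ≤ d → ∀ (Q : Finset ℕ) (T : Finset (Trans d)),
      (∀ t ∈ T, t.1 ∈ Q ∧ t.2.2 ∈ Q) →
      ∀ (p q : ℕ) (u v : Vec d),
        (∃ π, (∀ t ∈ π, t ∈ T) ∧ IsPathFrom p q π ∧ v = u + disp π) →
        ∃ π, ((∀ t ∈ π, t ∈ T) ∧ IsPathFrom p q π ∧ v = u + disp π) ∧
          π.length ≤
            (Q.card + T.card + tnorm T + vnorm u + vnorm v + 2) ^ (12 * d) := by
  intro d hd Q T hQT p q u v hreach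
  obtain ⟨π₀, hTmem, hpath, hdisp⟩ := hreach
  obtain ⟨N, hN⟩ : ∃ N', N' = Q.card + T.card + tnorm T + vnorm u + vnorm v + 2 := ⟨_, rfl⟩
  have hN2 : 2 ≤ N := by omega
  by_cases hnil : π₀ = []
  · exact ⟨π₀, ⟨hTmem, hpath, hdisp⟩, by simp [hnil]⟩
  obtain ⟨hOk, hq⟩ := isPathFrom_iff.1 hpath
  have hpQ : p ∈ Q := by
    cases π₀ with
    | nil => exact absurd rfl hnil
    | cons t₀ rest =>
      have h1 : t₀.1 = p := hOk.1
      rw [← h1]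
      exact (hQT t₀ (hTmem t₀ (List.mem_cons_self))).1
  have hstQ : stF p π₀ ⊆ Q := by
    intro a ha
    simp only [stF, Finset.mem_insert, List.mem_toFinset, List.mem_map] at ha
    rcases ha with rfl | ⟨t, ht, rfl⟩
    · exact hpQ
    · exact (hQT t (hTmem t ht)).2
  obtain ⟨n, hn⟩ : ∃ n', n' = (stF p π₀).card := ⟨_, rfl⟩
  have hnQ : n ≤ Q.card := by rw [hn]; exact Finset.card_le_card hstQ
  obtain ⟨ω, cs, o1, o2, o3, o4, o5, o6, o7⟩ := reduce p π₀ hOk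
  rw [← hn] at o5 o7
  obtain ⟨R, hRd, hRT, hinj⟩ := rank_main T
  obtain ⟨Δ, hΔ⟩ : ∃ D, D = (n+1) * tnorm T + 1 := ⟨_, rfl⟩
  obtain ⟨ρE, hρE⟩ : ∃ P, P = (vnorm u + vnorm v) + (n+1)^2 * tnorm T := ⟨_, rfl⟩
  have homega : ω.length ≤ (n+1)^2 := by
    have h1 : (n+1)^2 = n^2 + 2*n + 1 := by ring
    omega
  have hE : ∀ i, (((cs.map fun ac => disp ac.2).sum) i).natAbs ≤ ρE := by
    intro i
    have hcssum : (cs.map (fun ac => disp ac.2)).sum = disp π₀ - disp ω := by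
      rw [o6]; abel
    rw [hcssum]
    have h1 : disp π₀ = v - u := by rw [hdisp]; abel
    have h2 : ((disp π₀ - disp ω) i).natAbs ≤ ((disp π₀) i).natAbs + ((disp ω) i).natAbs := by
      have h2a : (disp π₀ - disp ω) i = disp π₀ i - disp ω i := rfl
      rw [h2a]; exact Int.natAbs_sub_le _ _
    have h3 : ((disp π₀) i).natAbs ≤ vnorm u + vnorm v := by
      rw [h1]
      have h3a : (v - u) i = v i - u i := rfl
      rw [h3a]
      have h3b := Int.natAbs_sub_le (v i) (u i)
      have h3c := natAbs_le_vnorm v i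
      have h3d := natAbs_le_vnorm u i
      omega
    have h4 : ((disp ω) i).natAbs ≤ (n+1)^2 * tnorm T := by
      calc ((disp ω) i).natAbs ≤ ω.length * tnorm T :=
            disp_bound ω (fun t ht => hTmem t (o3 t ht)) i
        _ ≤ (n+1)^2 * tnorm T := Nat.mul_le_mul_right _ homega
    omega
  have hmemW : ∀ x ∈ cs, toQ ((fun ac => disp ac.2) x) ∈ spanT T ∧ vnorm ((fun ac => disp ac.2) x) ≤ Δ := by
    intro x hx
    obtain ⟨a1, a2, a3, a4, a5⟩ := o5 x hx
    constructor
    · exact disp_mem_spanT (fun t ht => hTmem t (a4 t ht))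
    · apply vnorm_le_of_natAbs
      intro i
      calc ((disp x.2) i).natAbs ≤ x.2.length * tnorm T :=
            disp_bound x.2 (fun t ht => hTmem t (a4 t ht)) i
        _ ≤ (n+1) * tnorm T := Nat.mul_le_mul_right _ a5
        _ ≤ Δ := by omega
  obtain ⟨cs', c1, c2, c3⟩ := smallrep (fun ac => disp ac.2) (spanT T) R hinj Δ ρE
    (by omega) cs.length cs rfl hmemW hE
  have hanch : ∀ ac ∈ cs', ac.1 ∈ stF p ω ∧ Ok ac.1 ac.2 ∧ dst ac.1 ac.2 = ac.1 := by
    intro ac hac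
    obtain ⟨a1, a2, a3, a4, a5⟩ := o5 ac (c1 ac hac)
    exact ⟨by rw [o4]; exact a1, a2, a3⟩
  obtain ⟨ω', j1, j2, j3, j4, j5⟩ := insert_many cs' ω o1 hanch
  refine ⟨ω', ⟨?_, ?_, ?_⟩, ?_⟩
  · intro t ht
    rcases j5 t ht with h | ⟨ac, hac, hta⟩
    · exact hTmem t (o3 t h)
    · exact hTmem t ((o5 ac (c1 ac hac)).2.2.2.1 t hta)
  · rw [isPathFrom_iff]
    exact ⟨j1, by rw [j2, o2]; exact hq⟩
  · rw [hdisp]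
    congr 1
    rw [j4, c2]
    exact o6
  · -- length bound
    rw [← hN]
    have hb1 : n + 1 ≤ N := by omega
    have hlensum : (cs'.map (fun ac => ac.2.length)).sum ≤ cs'.length * (n+1) := by
      have h1 : ∀ x ∈ (cs'.map (fun ac => ac.2.length)), x ≤ n + 1 := by
        intro x hx
        obtain ⟨ac, hac, rfl⟩ := List.mem_map.1 hx
        exact (o5 ac (c1 ac hac)).2.2.2.2
      calc (cs'.map (fun ac => ac.2.length)).sum
          ≤ (cs'.map (fun ac => ac.2.length)).length • (n+1) := List.sum_le_card_nsmul _ _ h1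
        _ = cs'.length * (n+1) := by simp [smul_eq_mul]
    have hlen' : ω'.length ≤ (2*(ρE + (2*R.card+4)*Δ)+1)^R.card * (n+1) + (n+1)^2 := by
      rw [j3]
      have h2 : cs'.length * (n+1) ≤ (2*(ρE + (2*R.card+4)*Δ)+1)^R.card * (n+1) :=
        Nat.mul_le_mul_right _ c3
      omega
    rw [hΔ, hρE] at hlen'
    exact final_arith N n (tnorm T) R.card d ω'.length (vnorm u + vnorm v) hN2 hd hb1
      (by omega) (by omega) (by omega) hRd hlen'

/-- If `q(v)` is ℤ-reachable from `p(u)` in a `d`-VASS then it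
is ℤ-reachable by a path of length at most
`(|Q| + |T| + ‖T‖ + ‖u‖ + ‖v‖ + 2)^{c·d}`. -/
theorem statement18 :
    ∃ c : ℕ, ∀ d : ℕ, 1 ≤ d → ∀ (Q : Finset ℕ) (T : Finset (Trans d)),
      (∀ t ∈ T, t.1 ∈ Q ∧ t.2.2 ∈ Q) →
      ∀ (p q : ℕ) (u v : Vec d),
        Reach T Set.univ p u q v →
        ∃ π, Run T Set.univ p u q v π ∧
          π.length ≤
            (Q.card + T.card + tnorm T + vnorm u + vnorm v + 2) ^ (c * d) := by
  refine ⟨12, ?_⟩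
  intro d hd Q T hQT p q u v hreach
  obtain ⟨π₀, hT, hpath, -, hdisp, -⟩ := hreach
  obtain ⟨π, ⟨h1, h2, h3⟩, h4⟩ := statement18_aux d hd Q T hQT p q u v ⟨π₀, hT, hpath, hdisp⟩
  exact ⟨π, ⟨h1, h2, trivial, h3, fun i _ _ => trivial⟩, h4⟩

end VASS
end

section
/- Let G = (U,E) be a finite directed graph (with E ⊆ U×Σ×U for some set Σ) and let π ∈ E* be a path in G. Then there exist a path ρ₁ in G of length at most |U|·|E| that visits every vertex occurring on π at least once, and a flow-preserving function σ₁ : E → ℕ, such that Par_π = Par_{ρ₁} + σ₁ (pointwise addition of functions from E to ℕ). -/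
namespace LabeledGraph

variable {ν α : Type} [DecidableEq ν] [DecidableEq α]

/-- `IsPathFrom p q π` : the word of edges `π` is a path from `p` to `q`. -/
def IsPathFrom : ν → ν → List (ν × α × ν) → Prop
  | p, q, [] => p = q
  | p, q, e :: rest => e.1 = p ∧ IsPathFrom e.2.2 q rest

/-- The Parikh image of a word of edges. -/
def parikh (π : List (ν × α × ν)) : (ν × α × ν) → ℕ := fun e => π.count e

/-- A linear path scheme, presented as the initial segment `α₀` together with
the list of pairs `(βᵢ, αᵢ)`. -/
abbrev LPS (ν α : Type) := List (ν × α × ν) × List (List (ν × α × ν) × List (ν × α × ν))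

/-- The underlying word `α₀ β₁ α₁ ⋯ β_k α_k` of a linear path scheme. -/
def lpsSupport (ρ : LPS ν α) : List (ν × α × ν) :=
  ρ.1 ++ (ρ.2.map fun s => s.1 ++ s.2).flatten

/-- The length of a linear path scheme. -/
def lpsLen (ρ : LPS ν α) : ℕ := (lpsSupport ρ).length

/-- The number of cycles of a linear path scheme. -/
def numCycles (ρ : LPS ν α) : ℕ := ρ.2.length

/-- `ρ` is a linear path scheme from `p` to `q` over the edge set `E`. -/
def IsLPSFrom (E : Finset (ν × α × ν)) (p q : ν) (ρ : LPS ν α) : Prop :=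
  (∀ e ∈ lpsSupport ρ, e ∈ E) ∧ IsPathFrom p q (lpsSupport ρ) ∧
    ∀ s ∈ ρ.2, s.1 ≠ [] ∧ ∃ r, IsPathFrom r r s.1

/-- The word `α₀ β₁^{e₁} α₁ ⋯ β_k^{e_k} α_k` of a linear path scheme. -/
def lpsWord (ρ : LPS ν α) (e : List ℕ) : List (ν × α × ν) :=
  ρ.1 ++ (List.zipWith (fun s n => (List.replicate n s.1).flatten ++ s.2) ρ.2 e).flatten

/-- Membership in the language of a linear path scheme. -/
def InLang (ρ : LPS ν α) (π : List (ν × α × ν)) : Prop :=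
  ∃ e : List ℕ, e.length = numCycles ρ ∧ π = lpsWord ρ e

/-- A vertex `x` occurs on the word of edges `w`. -/
def OccursOn (x : ν) (w : List (ν × α × ν)) : Prop :=
  ∃ e ∈ w, e.1 = x ∨ e.2.2 = x

/-- A function `σ₁` on edges is flow-preserving if at every vertex the incoming
and outgoing weights agree. -/
def FlowPreserving (E : Finset (ν × α × ν)) (s : (ν × α × ν) → ℕ) : Prop :=
  ∀ x : ν, ∑ e ∈ E.filter (fun e => e.2.2 = x), s e =
    ∑ e ∈ E.filter (fun e => e.1 = x), s e

section Aux
set_option linter.unusedSectionVars false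

lemma isPathFrom_append {p m q : ν} {A B : List (ν × α × ν)}
    (hA : IsPathFrom p m A) (hB : IsPathFrom m q B) : IsPathFrom p q (A ++ B) := by
  induction A generalizing p with
  | nil => cases hA; simpa using hB
  | cons a A ih => exact ⟨hA.1, ih hA.2⟩

lemma isPathFrom_append_iff {p q : ν} {A B : List (ν × α × ν)} :
    IsPathFrom p q (A ++ B) ↔ ∃ m, IsPathFrom p m A ∧ IsPathFrom m q B := by
  constructor
  · intro h
    induction A generalizing p with
    | nil => exact ⟨p, rfl, h⟩
    | cons a A ih =>
      obtain ⟨m, h1, h2⟩ := ih h.2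
      exact ⟨m, ⟨h.1, h1⟩, h2⟩
  · rintro ⟨m, hA, hB⟩; exact isPathFrom_append hA hB

lemma isPathFrom_flatten_cycles {v : ν} {L : List (List (ν × α × ν))}
    (h : ∀ C ∈ L, IsPathFrom v v C) : IsPathFrom v v L.flatten := by
  induction L with
  | nil => rfl
  | cons C L ih =>
    simpa using isPathFrom_append (h C (by simp)) (ih fun C' hC' => h C' (by simp [hC']))

lemma exists_split_first {β : Type} [DecidableEq β] {l : List β} {a : β} (h : a ∈ l) :
    ∃ s t, l = s ++ a :: t ∧ a ∉ s := by
  induction l with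
  | nil => simp at h
  | cons b l ih =>
    by_cases hab : a = b
    · exact ⟨[], l, by simp [hab], by simp⟩
    · obtain ⟨s, t, h1, h2⟩ := ih (by simpa [hab] using h)
      exact ⟨b :: s, t, by simp [h1], by simp [h2, hab]⟩

/-- Flow balance of a path: at each vertex, in-count and out-count agree up to endpoints. -/
lemma path_filter_count {p q : ν} {π : List (ν × α × ν)} (h : IsPathFrom p q π) (x : ν) :
    (π.filter (fun e => e.2.2 = x)).length + (if p = x then 1 else 0) =
      (π.filter (fun e => e.1 = x)).length + (if q = x then 1 else 0) := by
  induction π generalizing p with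
  | nil => cases h; rfl
  | cons a π ih =>
    obtain ⟨h1, h2⟩ := h
    have := ih h2
    subst h1
    by_cases h3 : a.2.2 = x <;> by_cases h4 : a.1 = x <;>
      simp_all [List.filter_cons] <;> omega

lemma sum_count_filter {β : Type} [DecidableEq β] (S : Finset β) (w : List β)
    (hw : ∀ e ∈ w, e ∈ S) (P : β → Prop) [DecidablePred P] :
    ∑ e ∈ S.filter P, w.count e = (w.filter (fun e => P e)).length := by
  induction w with
  | nil => simp
  | cons a w ih =>
    have ha : a ∈ S := hw a (by simp)
    have ih' := ih fun e he => hw e (by simp [he])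
    rw [List.filter_cons]
    have hsum : (∑ x ∈ S.filter P, if a = x then 1 else 0) = if P a then 1 else 0 := by
      rw [Finset.sum_ite_eq (S.filter P) a (fun _ => 1)]
      simp [ha]
    by_cases hPa : P a <;>
      simp only [List.count_cons, Finset.sum_add_distrib, ih', hPa, decide_true, decide_false,
        if_true, if_false, List.length_cons, beq_iff_eq, hsum] <;> simp

/-- The two ways Lean elaborates `List.count` on edge triples agree. -/
lemma count_inst (w : List (ν × α × ν)) (e : ν × α × ν) :
    w.count e = @List.count _ instBEqOfDecidableEq e w := by
  induction w with
  | nil => rfl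
  | cons a w ih =>
    simp only [List.count_cons, ih]
    by_cases h : a = e <;> simp [h, instBEqOfDecidableEq]

lemma length_eq_sum_count {β : Type} [DecidableEq β] (S : Finset β) (w : List β)
    (hw : ∀ e ∈ w, e ∈ S) : w.length = ∑ e ∈ S, w.count e := by
  have := sum_count_filter S w hw (fun _ => True)
  simpa using this.symm

/-- The Parikh image of a cycle with edges in `E` is flow-preserving. -/
lemma flowPreserving_cycle (E : Finset (ν × α × ν)) {v : ν} {C : List (ν × α × ν)}
    (hCE : ∀ e ∈ C, e ∈ E) (hC : IsPathFrom v v C) :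
    FlowPreserving E (fun e => C.count e) := by
  intro x
  show ∑ e ∈ E.filter (fun e => e.2.2 = x), C.count e =
    ∑ e ∈ E.filter (fun e => e.1 = x), C.count e
  simp only [count_inst]
  rw [sum_count_filter E C hCE (fun e => e.2.2 = x),
    sum_count_filter E C hCE (fun e => e.1 = x)]
  have := path_filter_count hC x
  omega

lemma occursOn_append {x : ν} {A B : List (ν × α × ν)} :
    OccursOn x (A ++ B) ↔ OccursOn x A ∨ OccursOn x B := by
  simp [OccursOn, List.mem_append, or_and_right, exists_or]

/-- Decompose a path with `n+1` occurrences of edge `e` into a prefix ending at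
`v = e.2.2` containing `e`, followed by `n` cycles at `v`, and a suffix. -/
lemma exists_cycle_decomp (e : ν × α × ν) :
    ∀ (n : ℕ) (π : List (ν × α × ν)) (p q : ν), IsPathFrom p q π → n + 1 ≤ π.count e →
    ∃ (X : List (ν × α × ν)) (L : List (List (ν × α × ν))) (Y : List (ν × α × ν)),
      π = X ++ L.flatten ++ Y ∧ e ∈ X ∧ IsPathFrom p e.2.2 X ∧ L.length = n ∧
      (∀ C ∈ L, C ≠ [] ∧ IsPathFrom e.2.2 e.2.2 C) ∧ IsPathFrom e.2.2 q Y := by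
  intro n
  induction n with
  | zero =>
    intro π p q hpath hcount
    have he : e ∈ π := List.count_pos_iff.mp (by omega)
    obtain ⟨A, B, rfl, -⟩ := exists_split_first he
    obtain ⟨m, hA, hB⟩ := isPathFrom_append_iff.mp hpath
    refine ⟨A ++ [e], [], B, by simp, by simp, ?_, rfl, by simp, hB.2⟩
    exact isPathFrom_append hA (by exact ⟨hB.1, rfl⟩)
  | succ n ih =>
    intro π p q hpath hcount
    have he : e ∈ π := List.count_pos_iff.mp (by omega)
    obtain ⟨A, B, rfl, hnA⟩ := exists_split_first he
    obtain ⟨m, hA, hB⟩ := isPathFrom_append_iff.mp hpath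
    have hcB : n + 1 ≤ B.count e := by
      have : A.count e = 0 := List.count_eq_zero_of_not_mem hnA
      simp [List.count_append, List.count_cons] at hcount
      omega
    obtain ⟨X', L', Y, hBeq, heX', hX', hL'len, hL', hY⟩ := ih B e.2.2 q hB.2 hcB
    refine ⟨A ++ [e], X' :: L', Y, ?_, by simp, ?_, by simp [hL'len], ?_, hY⟩
    · simp [hBeq]
    · exact isPathFrom_append hA ⟨hB.1, rfl⟩
    · rintro C hC
      rcases List.mem_cons.mp hC with rfl | hC
      · exact ⟨by rintro rfl; simp at heX', hX'⟩
      · exact hL' C hC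

/-- The cycle-removal step: a too-long path contains a removable cycle whose
vertices all occur on the remaining path. -/
lemma step (U : Finset ν) (E : Finset (ν × α × ν)) (hE : ∀ e ∈ E, e.1 ∈ U ∧ e.2.2 ∈ U)
    (π : List (ν × α × ν)) (hπE : ∀ e ∈ π, e ∈ E) {p q : ν} (hpath : IsPathFrom p q π)
    (hlen : U.card * E.card < π.length) :
    ∃ (π' C : List (ν × α × ν)),
      π.length = π'.length + C.length ∧ C ≠ [] ∧ (∀ e ∈ C, e ∈ E) ∧
      (∃ r, IsPathFrom r r C) ∧ IsPathFrom p q π' ∧ (∀ e ∈ π', e ∈ E) ∧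
      (∀ x, OccursOn x π → OccursOn x π') ∧ (∀ a, π.count a = π'.count a + C.count a) := by
  -- pigeonhole: some edge occurs more than `U.card` times
  have hsum : π.length = ∑ e ∈ E, π.count e := by
    simp only [count_inst]; exact length_eq_sum_count E π hπE
  have hlt : ∑ _e ∈ E, U.card < ∑ e ∈ E, π.count e := by
    rw [← hsum, Finset.sum_const, smul_eq_mul]
    calc E.card * U.card = U.card * E.card := mul_comm _ _
    _ < π.length := hlen
  obtain ⟨e, heE, hcnt⟩ := Finset.exists_lt_of_sum_lt hlt
  obtain ⟨X, L, Y, hπeq, heX, hX, hLlen, hL, hY⟩ :=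
    exists_cycle_decomp e U.card π p q hpath (by omega)
  have hvU : e.2.2 ∈ U := (hE e heE).2
  -- removal of the `j`-th cycle
  let rm : ℕ → List (ν × α × ν) :=
    fun j => X ++ ((L.take j).flatten ++ (L.drop (j+1)).flatten) ++ Y
  -- a good cycle exists
  have hgood : ∃ j : Fin L.length, ∀ x, OccursOn x L[j.1] → OccursOn x (rm j.1) := by
    by_contra hbad
    push_neg at hbad
    choose f hf1 hf2 using hbad
    have hmaps : ∀ j : Fin L.length, f j ∈ U.erase e.2.2 := by
      intro j
      obtain ⟨e', he'C, hor⟩ := hf1 j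
      have he'π : e' ∈ π := by
        rw [hπeq]
        have : e' ∈ L.flatten := List.mem_flatten.mpr ⟨L[j.1], List.getElem_mem _, he'C⟩
        simp [this]
      have he'E := hE e' (hπE e' he'π)
      refine Finset.mem_erase.mpr ⟨?_, ?_⟩
      · intro hfv
        exact hf2 j (hfv ▸ ⟨e, by simp [rm, heX], Or.inr rfl⟩)
      · rcases hor with h | h <;> [exact h ▸ he'E.1; exact h ▸ he'E.2]
    have hcard : (U.erase e.2.2).card < (Finset.univ : Finset (Fin L.length)).card := by
      rw [Finset.card_erase_of_mem hvU, Finset.card_univ, Fintype.card_fin, hLlen]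
      have : 0 < U.card := Finset.card_pos.mpr ⟨_, hvU⟩
      omega
    obtain ⟨i, -, j, -, hij, hfij⟩ :=
      Finset.exists_ne_map_eq_of_card_lt_of_maps_to hcard fun j _ => hmaps j
    -- L[i] survives the removal of the j-th cycle
    have hmem : L[i.1] ∈ L.take j.1 ∨ L[i.1] ∈ L.drop (j.1+1) := by
      rcases lt_or_gt_of_ne (fun h => hij (Fin.ext h) : i.1 ≠ j.1) with h | h
      · left
        have h2 : i.1 < (L.take j.1).length := by simp [i.isLt]; omega
        have : (L.take j.1)[i.1] = L[i.1] := List.getElem_take ..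
        rw [← this]; exact List.getElem_mem _
      · right
        have h2 : i.1 - (j.1+1) < (L.drop (j.1+1)).length := by simp [i.isLt]; omega
        have : (L.drop (j.1+1))[i.1 - (j.1+1)] = L[i.1] := by
          rw [List.getElem_drop]; congr 1; omega
        rw [← this]; exact List.getElem_mem _
    obtain ⟨e', he'C, hor⟩ := hf1 i
    refine hf2 j ⟨e', ?_, hfij ▸ hor⟩
    have : e' ∈ (L.take j.1).flatten ∨ e' ∈ (L.drop (j.1+1)).flatten := by
      rcases hmem with h | h
      · exact Or.inl (List.mem_flatten.mpr ⟨L[i.1], h, he'C⟩)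
      · exact Or.inr (List.mem_flatten.mpr ⟨L[i.1], h, he'C⟩)
    simp only [rm, List.mem_append]
    tauto
  obtain ⟨j, hj⟩ := hgood
  have hLsplit : L = L.take j.1 ++ L[j.1] :: L.drop (j.1+1) := by
    rw [List.getElem_cons_drop, List.take_append_drop]
  have hfl : L.flatten = (L.take j.1).flatten ++ (L[j.1] ++ (L.drop (j.1+1)).flatten) := by
    conv_lhs => rw [hLsplit]
    rw [List.flatten_append, List.flatten_cons]
  have hπeq2 : π = X ++ ((L.take j.1).flatten ++ (L[j.1] ++ (L.drop (j.1+1)).flatten)) ++ Y := by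
    rw [hπeq, hfl]
  have hCL : L[j.1] ∈ L := List.getElem_mem _
  have hCprop := hL _ hCL
  have htake : ∀ C' ∈ L.take j.1, IsPathFrom e.2.2 e.2.2 C' :=
    fun C' hC' => (hL C' ((List.take_sublist _ _).mem hC')).2
  have hdrop : ∀ C' ∈ L.drop (j.1+1), IsPathFrom e.2.2 e.2.2 C' :=
    fun C' hC' => (hL C' ((List.drop_sublist _ _).mem hC')).2
  refine ⟨rm j.1, L[j.1], ?_, hCprop.1, ?_, ⟨e.2.2, hCprop.2⟩, ?_, ?_, ?_, ?_⟩
  · rw [hπeq2]; simp [rm]; omega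
  · intro a ha
    refine hπE a ?_
    rw [hπeq]
    simp only [List.mem_append, List.mem_flatten]
    exact Or.inl (Or.inr ⟨L[j.1], hCL, ha⟩)
  · show IsPathFrom p q (X ++ ((L.take j.1).flatten ++ (L.drop (j.1+1)).flatten) ++ Y)
    refine isPathFrom_append (isPathFrom_append hX ?_) hY
    exact isPathFrom_append (isPathFrom_flatten_cycles htake) (isPathFrom_flatten_cycles hdrop)
  · intro a ha
    refine hπE a ?_
    rw [hπeq2]
    simp only [rm, List.mem_append] at ha ⊢
    tauto
  · intro x hx
    rw [hπeq2] at hx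
    show OccursOn x (X ++ ((L.take j.1).flatten ++ (L.drop (j.1+1)).flatten) ++ Y)
    simp only [occursOn_append] at hx ⊢
    rcases hx with ((h | h | h | h) | h)
    · tauto
    · tauto
    · have h2 : OccursOn x (X ++ ((L.take j.1).flatten ++ (L.drop (j.1+1)).flatten) ++ Y) :=
        hj x h
      simp only [occursOn_append] at h2
      tauto
    · tauto
    · tauto
  · intro a
    rw [hπeq2]
    simp [rm, List.count_append]
    omega

end Aux

set_option linter.unusedSectionVars false in
lemma statement19_aux (U : Finset ν) (E : Finset (ν × α × ν))
    (hE : ∀ e ∈ E, e.1 ∈ U ∧ e.2.2 ∈ U) :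
    ∀ (n : ℕ) (π : List (ν × α × ν)), π.length ≤ n → (∀ e ∈ π, e ∈ E) →
    (∃ p q, IsPathFrom p q π) →
    ∃ (ρ₁ : List (ν × α × ν)) (σ₁ : (ν × α × ν) → ℕ),
      (∀ e ∈ ρ₁, e ∈ E) ∧ (∃ p q, IsPathFrom p q ρ₁) ∧
      ρ₁.length ≤ U.card * E.card ∧
      (∀ x : ν, OccursOn x π → OccursOn x ρ₁) ∧
      FlowPreserving E σ₁ ∧ (∀ e, e ∉ E → σ₁ e = 0) ∧
      (∀ e, parikh π e = parikh ρ₁ e + σ₁ e) := by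
  intro n
  induction n with
  | zero =>
    intro π hn hπE hπ
    refine ⟨π, 0, hπE, hπ, ?_, fun x h => h, fun x => by simp, fun e _ => rfl, fun e => rfl⟩
    omega
  | succ n ih =>
    intro π hn hπE hπ
    by_cases hshort : π.length ≤ U.card * E.card
    · exact ⟨π, 0, hπE, hπ, hshort, fun x h => h, fun x => by simp, fun e _ => rfl, fun e => rfl⟩
    · push_neg at hshort
      obtain ⟨p, q, hpath⟩ := hπ
      obtain ⟨π', C, hlen, hCne, hCE, ⟨r, hCcyc⟩, hπ'path, hπ'E, hocc, hcount⟩ :=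
        step U E hE π hπE hpath hshort
      have hClen : 1 ≤ C.length := by
        cases C with
        | nil => exact absurd rfl hCne
        | cons a C => simp
      obtain ⟨ρ₁, σ', hρE, hρpath, hρlen, hρocc, hσflow, hσzero, hσcount⟩ :=
        ih π' (by omega) hπ'E ⟨p, q, hπ'path⟩
      refine ⟨ρ₁, fun a => σ' a + C.count a, hρE, hρpath, hρlen,
        fun x hx => hρocc x (hocc x hx), ?_, ?_, ?_⟩
      · intro x
        have h1 := hσflow x
        have h2 := flowPreserving_cycle E hCE hCcyc x
        simp only [Finset.sum_add_distrib, h1, h2]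
      · intro a ha
        have h1 := hσzero a ha
        have h2 : C.count a = 0 := List.count_eq_zero_of_not_mem (fun h => ha (hCE a h))
        simp [h1, h2]
      · intro a
        have h1 := hσcount a
        have h2 := hcount a
        simp only [parikh] at *
        omega

/-- claim (a)–(c) in the proof of the Parikh image lemma.
Every path `π` decomposes as a short path `ρ₁` visiting all vertices of `π`,
plus a flow-preserving remainder `σ₁`, on the level of Parikh images. -/
theorem statement19 {ν α : Type} [DecidableEq ν] [DecidableEq α]
    (U : Finset ν) (E : Finset (ν × α × ν))
    (hE : ∀ e ∈ E, e.1 ∈ U ∧ e.2.2 ∈ U)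
    (π : List (ν × α × ν)) (hπE : ∀ e ∈ π, e ∈ E)
    (hπ : ∃ p q, IsPathFrom p q π) :
    ∃ (ρ₁ : List (ν × α × ν)) (σ₁ : (ν × α × ν) → ℕ),
      (∀ e ∈ ρ₁, e ∈ E) ∧ (∃ p q, IsPathFrom p q ρ₁) ∧
      ρ₁.length ≤ U.card * E.card ∧
      (∀ x : ν, OccursOn x π → OccursOn x ρ₁) ∧
      FlowPreserving E σ₁ ∧ (∀ e, e ∉ E → σ₁ e = 0) ∧
      (∀ e, parikh π e = parikh ρ₁ e + σ₁ e) := by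
  exact statement19_aux U E hE π.length π le_rfl hπE hπ

end LabeledGraph
end
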